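/- arXiv:2206.01054 — 3 statements merged into one kernel-verified Lean document; each statement's English description precedes it below -/
import Mathlib

section
/- Let G be a finite group, let π be an automorphism of the undirected reduced power graph RP(G), and let x, y be non-identity elements of G. Then ⟨y⟩ ⊊ ⟨x⟩ if and only if ⟨y^π⟩ ⊊ ⟨x^π⟩. -/
open Subgroup Set

variable (G : Type*) [Group G]

/-- Arc of the directed reduced power graph `→RP(G)`: from `x` to `y` iff `⟨y⟩ ⊊ ⟨x⟩`. -/
def rpArc (x y : G) : Prop := zpowers y < zpowers x

/-- Adjacency in the undirected reduced power graph `RP(G)`: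
`x` and `y` are adjacent iff `⟨x⟩ ⊊ ⟨y⟩` or `⟨y⟩ ⊊ ⟨x⟩`. -/
def rpAdj (x y : G) : Prop := zpowers x < zpowers y ∨ zpowers y < zpowers x

/-- `x ≃ y` iff `x` and `y` have the same neighbourhood in `RP(G)`. -/
def simEq (x y : G) : Prop := ∀ z : G, rpAdj G x z ↔ rpAdj G y z

/-- The `≃`-class `x̂` of `x`. -/
def hatCls (x : G) : Set G := {y | simEq G y x}

/-- The `∼`-class `[x]` of `x`: the set of generators of `⟨x⟩`. -/
def genCls (x : G) : Set G := {y | zpowers y = zpowers x}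

/-- The automorphism group of the directed reduced power graph `→RP(G)`,
as a subgroup of the permutations of `G`. -/
def DRPAut : Subgroup (Equiv.Perm G) where
  carrier := {π | ∀ x y : G, rpArc G (π x) (π y) ↔ rpArc G x y}
  one_mem' := fun _ _ => Iff.rfl
  mul_mem' := by
    intro a b ha hb x y
    simp only [Equiv.Perm.mul_apply]
    exact (ha (b x) (b y)).trans (hb x y)
  inv_mem' := by
    intro a ha x y
    have h := ha (a⁻¹ x) (a⁻¹ y)
    simp only [Equiv.Perm.coe_inv, Equiv.apply_symm_apply] at h
    exact h.symm

/-- The automorphism group of the undirected reduced power graph `RP(G)`,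
as a subgroup of the permutations of `G`. -/
def RPAut : Subgroup (Equiv.Perm G) where
  carrier := {π | ∀ x y : G, rpAdj G (π x) (π y) ↔ rpAdj G x y}
  one_mem' := fun _ _ => Iff.rfl
  mul_mem' := by
    intro a b ha hb x y
    simp only [Equiv.Perm.mul_apply]
    exact (ha (b x) (b y)).trans (hb x y)
  inv_mem' := by
    intro a ha x y
    have h := ha (a⁻¹ x) (a⁻¹ y)
    simp only [Equiv.Perm.coe_inv, Equiv.apply_symm_apply] at h
    exact h.symm

/-- `⟨x⟩` is a maximal cyclic subgroup of `G`. -/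
def IsMaxCyc (x : G) : Prop := ∀ y : G, zpowers x ≤ zpowers y → zpowers x = zpowers y

/-- The `≃`-class of `x` is of Type I: it is a single `∼`-class, `x̂ = [x]`. -/
def TypeI (x : G) : Prop := hatCls G x = genCls G x

/-- The `≃`-class of `x` is of Type II: it is a union of `r ≥ 2` `∼`-classes whose
cyclic subgroups are distinct maximal cyclic subgroups of `G`, all of the same order. -/
def TypeII (x : G) : Prop :=
  (∃ y z : G, simEq G y x ∧ simEq G z x ∧ zpowers y ≠ zpowers z) ∧
  ∀ y : G, simEq G y x → IsMaxCyc G y ∧ orderOf y = orderOf x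

/-- The `≃`-class of `x` is of Type III: `G` is non-cyclic, the class is a union of
`r ≥ 2` `∼`-classes whose cyclic subgroups are maximal cyclic subgroups of prime order,
and at least two distinct orders occur. -/
def TypeIII (x : G) : Prop :=
  ¬ IsCyclic G ∧
  (∃ y z : G, simEq G y x ∧ simEq G z x ∧ orderOf y ≠ orderOf z) ∧
  ∀ y : G, simEq G y x → IsMaxCyc G y ∧ (orderOf y).Prime

/-- The `≃`-class of `x` is of Type IV with parameter `(p, q)`: it is a union of exactly
two `∼`-classes of elements of distinct prime orders `p` and `q`, the corresponding cyclic
subgroups being non-maximal when `G` is non-cyclic, and maximal when `G` is cyclic. -/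
def TypeIV (x : G) (p q : ℕ) : Prop :=
  p.Prime ∧ q.Prime ∧ p ≠ q ∧
  (∃ x₁ x₂ : G, simEq G x₁ x ∧ simEq G x₂ x ∧ orderOf x₁ = p ∧ orderOf x₂ = q ∧
     ∀ y : G, simEq G y x → zpowers y = zpowers x₁ ∨ zpowers y = zpowers x₂) ∧
  ((¬ IsCyclic G ∧ ∀ y : G, simEq G y x → ¬ IsMaxCyc G y) ∨
   (IsCyclic G ∧ ∀ y : G, simEq G y x → IsMaxCyc G y))

/-- A `P(G)`-permutation: a permutation `σ` of `G` preserving element orders, mapping each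
`∼`-class `[x]` onto `[x^σ]`, and preserving inclusion and non-inclusion of cyclic subgroups. -/
def IsPPerm (σ : Equiv.Perm G) : Prop :=
  (∀ x : G, orderOf (σ x) = orderOf x) ∧
  (∀ x : G, σ '' genCls G x = genCls G (σ x)) ∧
  (∀ x y : G, zpowers y ≤ zpowers x ↔ zpowers (σ y) ≤ zpowers (σ x))

/-- A permutation of `G` fixing every `≃`-class setwise. -/
def FixesClasses (τ : Equiv.Perm G) : Prop := ∀ x : G, simEq G (τ x) x

namespace RPNT

open Nat Finset

lemma prod_ge_two {S : Finset ℕ} (hS : ∀ a ∈ S, 1 ≤ a) {b : ℕ} (hb : b ∈ S) (hb2 : 2 ≤ b) :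
    2 ≤ ∏ a ∈ S, a := by
  classical
  calc 2 ≤ b := hb2
  _ ≤ ∏ a ∈ S, a := Finset.single_le_prod' (fun i hi => hS i hi) hb

/-- Sum vs product for a finset of positive naturals. -/
lemma sum_le_prod_aux (S : Finset ℕ) (hS : ∀ a ∈ S, 1 ≤ a) :
    ((∑ a ∈ S, a) ≤ (∏ a ∈ S, a) + 1) ∧ (1 ∉ S → (∑ a ∈ S, a) ≤ ∏ a ∈ S, a) := by
  classical
  induction S using Finset.induction with
  | empty => simp
  | @insert a S' ha IH =>
    have hS' : ∀ b ∈ S', 1 ≤ b := fun b hb => hS b  (Finset.mem_insert_of_mem hb)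
    have ha1 : 1 ≤ a := hS a  (Finset.mem_insert_self _ _)
    obtain ⟨IH1, IH2⟩ := IH hS'
    rw [Finset.sum_insert ha, Finset.prod_insert ha]
    by_cases hS'e : S' = ∅
    · subst hS'e; simp
    -- S' nonempty
    obtain ⟨b, hb⟩ := Finset.nonempty_of_ne_empty hS'e
    constructor
    · -- weak part
      rcases eq_or_lt_of_le ha1 with h1 | h2
    -- a = 1
      · have h1' : a = 1 := h1.symm
        subst h1'
        have h1S' : 1 ∉ S' := ha
        have := IH2 h1S'
        omega
      · -- a ≥ 2
        by_cases hb1 : S' = {1}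
        · subst hb1; simp
        · have hP2 : 2 ≤ ∏ x ∈ S', x := by
            -- S' has an element ≥ 2
            obtain ⟨c, hc, hc2⟩ : ∃ c ∈ S', 2 ≤ c := by
              by_contra hcon
              push_neg at hcon
              apply hb1
              apply Finset.eq_singleton_iff_nonempty_unique_mem.2
              exact ⟨⟨b, hb⟩, fun x hx => by have := hS' x hx; have := hcon x hx; omega⟩
            exact prod_ge_two hS' hc hc2
          have key : a + (∏ x ∈ S', x) ≤ a * ∏ x ∈ S', x := by nlinarith
          omega
    · -- strong part
      intro h1
      have ha2 : 2 ≤ a := by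
        have : a ≠ 1 := by rintro rfl; exact h1  (Finset.mem_insert_self _ _)
        omega
      have h1S' : 1 ∉ S' := fun hmem => h1  (Finset.mem_insert_of_mem hmem)
      have hsum := IH2 h1S'
      have hP2 : 2 ≤ ∏ x ∈ S', x := by
        obtain ⟨c, hc⟩ := Finset.nonempty_of_ne_empty hS'e
        have := hS' c hc
        have hc2 : 2 ≤ c := by
          have : c ≠ 1 := by rintro rfl; exact h1S' hc
          have := hS' c hc; omega
        exact prod_ge_two hS' hc hc2
      have key : a + (∏ x ∈ S', x) ≤ a * ∏ x ∈ S', x := by nlinarith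
      omega

/-- strict version: all elements ≥ 2, distinct, at least two of them. -/
lemma sum_lt_prod {S : Finset ℕ} (hS : ∀ a ∈ S, 2 ≤ a) (hcard : 2 ≤ S.card) :
    (∑ a ∈ S, a) < ∏ a ∈ S, a := by
  classical
  induction S using Finset.induction with
  | empty => simp at hcard
  | @insert a S' ha IH =>
    have hS' : ∀ b ∈ S', 2 ≤ b := fun b hb => hS b  (Finset.mem_insert_of_mem hb)
    have ha2 : 2 ≤ a := hS a  (Finset.mem_insert_self _ _)
    rw [Finset.sum_insert ha, Finset.prod_insert ha]
    rw [Finset.card_insert_of_notMem ha] at hcard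
    rcases Nat.lt_or_ge S'.card 2 with hc1 | hc2
    · -- S'.card = 1
      have hc1' : S'.card = 1 := by omega
      obtain ⟨b, hb⟩ := Finset.card_eq_one.1 hc1'
      subst hb
      simp only [Finset.sum_singleton, Finset.prod_singleton]
      have hb2 : 2 ≤ b := hS' b  (Finset.mem_singleton_self _)
      have hab : a ≠ b := by intro h; subst h; exact ha  (Finset.mem_singleton_self _)
      -- a + b < a * b for distinct a,b ≥ 2
      rcases Nat.lt_or_ge a b with h | h
      · nlinarith
      · have : b < a := lt_of_le_of_ne h (fun hh => hab hh.symm)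
        nlinarith
    · have hsum := IH hS' hc2
      have hP4 : 4 ≤ ∏ x ∈ S', x := by
        calc 4 ≤ ∑ x ∈ S', x := by
              obtain ⟨b, hb⟩ := Finset.card_pos.1 (by omega : 0 < S'.card)
              have hbs : 2 ≤ b := hS' b hb
              have : ∑ x ∈ S', x = b + ∑ x ∈ S'.erase b, x := (Finset.add_sum_erase _ _ hb).symm
              have hc' : 0 < (S'.erase b).card := by
                rw [Finset.card_erase_of_mem hb]; omega
              obtain ⟨c, hc⟩ := Finset.card_pos.1 hc'
              have hcs : 2 ≤ c := hS' c (Finset.mem_of_mem_erase hc)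
              have : ∑ x ∈ S'.erase b, x = c + ∑ x ∈ (S'.erase b).erase c, x :=
                (Finset.add_sum_erase _ _ hc).symm
              omega
        _ ≤ ∏ x ∈ S', x := le_of_lt hsum
      nlinarith

end RPNT

namespace RPNT2
open Nat Finset RPNT

lemma totient_le_of_dvd {m n : ℕ} (h : m ∣ n) (hn : 0 < n) : φ m ≤ φ n :=
  Nat.le_of_dvd (Nat.totient_pos.2 hn) (Nat.totient_dvd_of_dvd h)

/-- If `m` properly divides `n` and they have the same totient, then `n = 2m` with `m` odd. -/
lemma totient_eq_of_dvd_lt {m n : ℕ} (hm : 0 < m) (hdvd : m ∣ n) (hlt : m < n)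
    (heq : φ n = φ m) : n = 2 * m ∧ Odd m := by
  obtain ⟨k, hk⟩ := hdvd
  have hk0 : k ≠ 0 := by rintro rfl; simp at hk; omega
  have hk1 : k ≠ 1 := by rintro rfl; simp at hk; omega
  have hφm : 0 < φ m := Nat.totient_pos.2 hm
  have key : ∀ p : ℕ, p.Prime → p ∣ k → p = 2 ∧ ¬ p ∣ m := by
    intro p hp hpk
    have hpm_dvd_n : m * p ∣ n := by
      obtain ⟨k', hk'⟩ := hpk
      exact ⟨k', by rw [hk, hk']; ring⟩
    have hdvdφ : φ (m * p) ∣ φ m := heq ▸ Nat.totient_dvd_of_dvd hpm_dvd_n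
    by_cases hpm : p ∣ m
    · exfalso
      have hmul : φ (p * m) = p * φ m := Nat.totient_mul_of_prime_of_dvd hp hpm
      rw [mul_comm m p, hmul] at hdvdφ
      have hle := Nat.le_of_dvd hφm hdvdφ
      have := hp.two_le
      nlinarith
    · have hcop : Nat.Coprime m p := ((Nat.Prime.coprime_iff_not_dvd hp).2 hpm).symm
      rw [Nat.totient_mul hcop, Nat.totient_prime hp] at hdvdφ
      have hle := Nat.le_of_dvd hφm hdvdφ
      have hp1 : p - 1 ≤ 1 := by
        by_contra hcon
        push_neg at hcon
        nlinarith
      have := hp.two_le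
      refine ⟨by omega, hpm⟩
  obtain ⟨p, hp, hpk⟩ := Nat.exists_prime_and_dvd hk1
  obtain ⟨hp2, hpm⟩ := key p hp hpk
  subst hp2
  have hmodd : Odd m := Nat.odd_iff.2 (by omega)
  refine ⟨?_, hmodd⟩
  -- show k = 2
  by_contra hne
  have hk2ne : k ≠ 2 := by
    intro h; apply hne; rw [hk, h]; ring
  -- then 4 ∣ k
  have h4 : 4 ∣ k := by
    obtain ⟨k', hk'⟩ := hpk
    have hk'0 : k' ≠ 0 := by rintro rfl; simp at hk'; omega
    have hk'1 : k' ≠ 1 := by rintro rfl; omega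
    obtain ⟨p', hp', hp'k⟩ := Nat.exists_prime_and_dvd hk'1
    have hp'2 : p' = 2 := (key p' hp' (hk' ▸ Dvd.dvd.mul_left hp'k 2)).1
    subst hp'2
    obtain ⟨k'', hk''⟩ := hp'k
    exact ⟨k'', by rw [hk', hk'']; ring⟩
  exfalso
  have hm4 : m * 4 ∣ n := by
    obtain ⟨k', hk'⟩ := h4
    exact ⟨k', by rw [hk, hk']; ring⟩
  have hdvdφ : φ (m * 4) ∣ φ m := heq ▸ Nat.totient_dvd_of_dvd hm4
  have hcop : Nat.Coprime m 4 := by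
    have h2 : Nat.Coprime 2 m := (Nat.Prime.coprime_iff_not_dvd Nat.prime_two).2 hpm
    have : Nat.Coprime m 2 := h2.symm
    have h4' : Nat.Coprime m (2 ^ 2) := this.pow_right 2
    simpa using h4'
  rw [Nat.totient_mul hcop, (by decide : φ 4 = 2)] at hdvdφ
  have hle := Nat.le_of_dvd hφm hdvdφ
  omega


lemma prod_totient_primes {Q : Finset ℕ} (hQ : ∀ q ∈ Q, q.Prime) :
    φ (∏ q ∈ Q, q) = ∏ q ∈ Q, (q - 1) := by
  classical
  induction Q using Finset.induction with
  | empty => simp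
  | @insert a Q' ha IH =>
    have hQ' : ∀ q ∈ Q', q.Prime := fun q hq => hQ q (Finset.mem_insert_of_mem hq)
    have hap : a.Prime := hQ a (Finset.mem_insert_self _ _)
    rw [Finset.prod_insert ha, Finset.prod_insert ha]
    have hcop : Nat.Coprime a (∏ q ∈ Q', q) := by
      apply Nat.Coprime.prod_right
      intro q hq
      exact (Nat.coprime_primes hap (hQ' q hq)).2 (by rintro rfl; exact ha hq)
    rw [Nat.totient_mul hcop, Nat.totient_prime hap, IH hQ']

lemma sub_one_injOn_primes {Q : Finset ℕ} (hQ : ∀ q ∈ Q, q.Prime) :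
    Set.InjOn (fun q => q - 1) Q := by
  intro a ha b hb hab
  have := (hQ a ha).two_le
  have := (hQ b hb).two_le
  simp only at hab
  omega

/-- key facts about the image `A = (· - 1) '' Q`. -/
lemma sum_prod_transfer {Q : Finset ℕ} (hQ : ∀ q ∈ Q, q.Prime) :
    (∑ a ∈ Q.image (fun q => q - 1), a) = (∑ q ∈ Q, (q - 1)) ∧
    (∏ a ∈ Q.image (fun q => q - 1), a) = (∏ q ∈ Q, (q - 1)) := by
  classical
  constructor
  · exact Finset.sum_image (fun a ha b hb h => sub_one_injOn_primes hQ ha hb h)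
  · exact Finset.prod_image (fun a ha b hb h => sub_one_injOn_primes hQ ha hb h)

/-- NT4 : bound on the sum of `p-1` over primes dividing `n`. -/
lemma sum_sub_one_le_totient {n : ℕ} (hn : 0 < n) {Q : Finset ℕ}
    (hQ : ∀ q ∈ Q, q.Prime ∧ q ∣ n) : (∑ q ∈ Q, (q - 1)) ≤ φ n + 1 := by
  classical
  have hQP : ∀ q ∈ Q, q.Prime := fun q hq => (hQ q hq).1
  obtain ⟨hsum, hprod⟩ := sum_prod_transfer hQP
  have hprod_dvd : (∏ q ∈ Q, q) ∣ n :=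
    Finset.prod_primes_dvd n (fun q hq => (hQP q hq).prime) (fun q hq => (hQ q hq).2)
  have h1 : (∏ q ∈ Q, (q - 1)) ≤ φ n := by
    rw [← prod_totient_primes hQP]
    exact totient_le_of_dvd hprod_dvd hn
  have h2 := (sum_le_prod_aux (Q.image (fun q => q - 1))
    (by intro a ha; obtain ⟨q, hq, rfl⟩ := Finset.mem_image.1 ha
        have := (hQP q hq).two_le; omega)).1
  rw [hsum, hprod] at h2
  omega

lemma even_sum' {s : Finset ℕ} {f : ℕ → ℕ} (h : ∀ a ∈ s, Even (f a)) :
    Even (∑ a ∈ s, f a) := by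
  classical
  induction s using Finset.induction with
  | empty => simp
  | @insert a s' ha IH =>
    rw [Finset.sum_insert ha]
    exact (h a (Finset.mem_insert_self _ _)).add
      (IH (fun b hb => h b (Finset.mem_insert_of_mem hb)))

lemma odd_prime_sub_one_even {q : ℕ} (hq : q.Prime) (h2 : q ≠ 2) : Even (q - 1) := by
  have := hq.two_le
  have hodd : Odd q := hq.odd_of_ne_two h2
  rw [Nat.odd_iff] at hodd
  refine Nat.even_iff.2 ?_
  omega

/-- parity: if `2 ∈ Q` (primes), the sum of `q-1` is odd. -/
lemma odd_sum_of_two_mem {Q : Finset ℕ} (hQ : ∀ q ∈ Q, q.Prime) (h2 : 2 ∈ Q) :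
    Odd (∑ q ∈ Q, (q - 1)) := by
  classical
  rw [← Finset.add_sum_erase _ _ h2]
  have heven : Even (∑ q ∈ Q.erase 2, (q - 1)) := by
    apply even_sum'
    intro q hq
    exact odd_prime_sub_one_even (hQ q (Finset.mem_of_mem_erase hq))
      (Finset.ne_of_mem_erase hq)
  rcases heven with ⟨c, hc⟩
  exact ⟨c, by omega⟩

lemma even_sum_of_two_not_mem {Q : Finset ℕ} (hQ : ∀ q ∈ Q, q.Prime) (h2 : 2 ∉ Q) :
    Even (∑ q ∈ Q, (q - 1)) := by
  apply even_sum'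
  intro q hq
  exact odd_prime_sub_one_even (hQ q hq) (by rintro rfl; exact h2 hq)

/-- NT5' : if the sum of `q-1` over primes dividing composite `n` equals `φ n`, then `n` is even. -/
lemma even_of_sum_sub_one_eq_totient {n : ℕ} (hn2 : 2 ≤ n) (hnp : ¬ n.Prime)
    {Q : Finset ℕ} (hQ : ∀ q ∈ Q, q.Prime ∧ q ∣ n)
    (heq : (∑ q ∈ Q, (q - 1)) = φ n) : Even n := by
  classical
  have hn3 : 2 < n := by
    rcases Nat.lt_or_ge n 3 with h | h
    · interval_cases n
      · exact absurd Nat.prime_two hnp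
    · omega
  have hφeven : Even (φ n) := Nat.totient_even hn3
  have hφpos : 0 < φ n := Nat.totient_pos.2 (by omega)
  have hφ2 : 2 ≤ φ n := by
    rcases hφeven with ⟨c, hc⟩; omega
  have hQP : ∀ q ∈ Q, q.Prime := fun q hq => (hQ q hq).1
  set A := Q.image (fun q => q - 1) with hA
  obtain ⟨hsum, hprod⟩ := sum_prod_transfer hQP
  have hprod_dvd : (∏ q ∈ Q, q) ∣ n :=
    Finset.prod_primes_dvd n (fun q hq => (hQP q hq).prime) (fun q hq => (hQ q hq).2)
  have hPle : (∏ a ∈ A, a) ≤ φ n := by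
    rw [hprod, ← prod_totient_primes hQP]
    exact totient_le_of_dvd hprod_dvd (by omega)
  have hA1 : ∀ a ∈ A, 1 ≤ a := by
    intro a ha; obtain ⟨q, hq, rfl⟩ := Finset.mem_image.1 ha
    have := (hQP q hq).two_le; omega
  have hSle := (sum_le_prod_aux A hA1).1
  have hSA : (∑ a ∈ A, a) = φ n := by rw [hsum]; exact heq
  -- Π_A ∈ {φ n - 1, φ n}
  have hPcases : (∏ a ∈ A, a) = φ n ∨ (∏ a ∈ A, a) = φ n - 1 := by omega
  rcases hPcases with hP | hP
  · -- Π = φ n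
    by_cases h1A : 1 ∈ A
    · -- 2 ∈ Q; show contradiction unless A = {1}
      have h2Q : (2:ℕ) ∈ Q := by
        obtain ⟨q, hq, hq1⟩ := Finset.mem_image.1 h1A
        have hq2 := (hQP q hq).two_le
        have : q = 2 := by omega
        rwa [← this]
      have hodd : Odd (∑ q ∈ Q, (q - 1)) := odd_sum_of_two_mem hQP h2Q
      -- the sum equals φ n which is even: contradiction
      exfalso
      rw [heq] at hodd
      rcases hφeven with ⟨c, hc⟩
      rcases hodd with ⟨d, hd⟩
      omega
    · -- 1 ∉ A : all elements even ≥ 2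
      have hA2 : ∀ a ∈ A, 2 ≤ a := by
        intro a ha
        have := hA1 a ha
        have : a ≠ 1 := by rintro rfl; exact h1A ha
        omega
      rcases Nat.lt_or_ge A.card 2 with hc | hc
      · -- card ≤ 1
        rcases Nat.lt_or_ge A.card 1 with hc0 | hc1
        · have : A = ∅ := Finset.card_eq_zero.1 (by omega)
          rw [this] at hSA; simp at hSA; omega
        · have hc1' : A.card = 1 := by omega
          obtain ⟨a, ha⟩ := Finset.card_eq_one.1 hc1'
          have haA : a ∈ A := by rw [ha]; exact Finset.mem_singleton_self _
          obtain ⟨q, hq, hqa⟩ := Finset.mem_image.1 haA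
          have hsum_a : a = φ n := by rw [ha] at hSA; simpa using hSA
          -- φ q = q - 1 = a = φ n, q ∣ n, q < n
          have hqprime := hQP q hq
          have hqdvd := (hQ q hq).2
          have hqn : q ≠ n := by rintro rfl; exact hnp hqprime
          have hqlt : q < n := lt_of_le_of_ne (Nat.le_of_dvd (by omega) hqdvd) hqn
          have hφq : φ n = φ q := by
            rw [Nat.totient_prime hqprime]; omega
          obtain ⟨h2m, hodd⟩ := totient_eq_of_dvd_lt (by have := hqprime.two_le; omega) hqdvd hqlt hφq
          exact ⟨q, by omega⟩
      · have := sum_lt_prod hA2 hc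
        omega
  · -- Π = φ n - 1 : odd, so all elements odd, hence = 1, contradiction
    exfalso
    have hPodd : ¬ Even (∏ a ∈ A, a) := by
      rw [hP]
      rcases hφeven with ⟨c, hc⟩
      intro ⟨d, hd⟩
      omega
    have hall1 : ∀ a ∈ A, a = 1 := by
      intro a ha
      by_contra hne
      have ha2 : 2 ≤ a := by have := hA1 a ha; omega
      obtain ⟨q, hq, hqa⟩ := Finset.mem_image.1 ha
      have heva : Even a := by
        rw [← hqa]
        exact odd_prime_sub_one_even (hQP q hq) (by rintro rfl; simp at hqa; omega)
      apply hPodd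
      rcases heva with ⟨c, hc⟩
      have hdvd : a ∣ ∏ x ∈ A, x := Finset.dvd_prod_of_mem _ ha
      obtain ⟨e, he⟩ := hdvd
      exact ⟨c * e, by rw [he, hc]; ring⟩
    have hsub : A ⊆ {1} := fun a ha => Finset.mem_singleton.2 (hall1 a ha)
    have hcard : A.card ≤ 1 := le_trans (Finset.card_le_card hsub) (by simp)
    have hSle1 : (∑ a ∈ A, a) ≤ 1 := by
      calc (∑ a ∈ A, a) = ∑ a ∈ A, 1 := Finset.sum_congr rfl hall1
      _ = A.card := by simp
      _ ≤ 1 := hcard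
    omega

end RPNT2


namespace RPWork

variable {G}

lemma adj_irrefl (x : G) : ¬ rpAdj G x x := by
  intro h; rcases h with h | h <;> exact lt_irrefl _ h

lemma adj_symm {x y : G} (h : rpAdj G x y) : rpAdj G y x := h.symm

lemma adj_of_lt {x y : G} (h : zpowers y < zpowers x) : rpAdj G x y := Or.inr h

lemma isCyclic_zpowers (a : G) : IsCyclic (zpowers a) := by
  refine ⟨⟨⟨a, mem_zpowers a⟩, ?_⟩⟩
  rintro ⟨u, hu⟩
  obtain ⟨k, hk⟩ := hu
  exact ⟨k, Subtype.ext (by simpa using hk)⟩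

section Fin
variable [Fintype G]

lemma orderOf_dvd_of_le {a v : G} (h : zpowers a ≤ zpowers v) : orderOf a ∣ orderOf v :=
  orderOf_dvd_of_mem_zpowers (h (mem_zpowers a))

lemma orderOf_lt_of_lt {a v : G} (h : zpowers a < zpowers v) : orderOf a < orderOf v := by
  have hle : orderOf a ∣ orderOf v := orderOf_dvd_of_le h.le
  have hne : orderOf a ≠ orderOf v := by
    intro heq
    apply h.ne
    have h1 : (zpowers a : Set G) ⊆ (zpowers v : Set G) := h.le
    have hcard : (zpowers v : Set G).ncard ≤ (zpowers a : Set G).ncard := by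
      have c1 : (zpowers a : Set G).ncard = orderOf a := by
        rw [← Nat.card_zpowers a]; exact (Nat.card_coe_set_eq _).symm
      have c2 : (zpowers v : Set G).ncard = orderOf v := by
        rw [← Nat.card_zpowers v]; exact (Nat.card_coe_set_eq _).symm
      omega
    have := Set.eq_of_subset_of_ncard_le h1 hcard (Set.toFinite _)
    exact SetLike.coe_injective this
  have hpos : 0 < orderOf v := orderOf_pos v
  exact lt_of_le_of_ne (Nat.le_of_dvd hpos hle) hne

lemma ne_one_of_lt {a v : G} (h : zpowers a < zpowers v) : v ≠ 1 := by
  rintro rfl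
  simp only [zpowers_one_eq_bot] at h
  exact (not_lt_bot h)

/-- the subgroup generated by an element of a cyclic group is determined by the order -/
lemma zpowers_eq_of_orderOf_eq {v a b : G} (ha : a ∈ zpowers v) (hb : b ∈ zpowers v)
    (h : orderOf a = orderOf b) : zpowers a = zpowers b := by
  set n := orderOf v with hn
  have hn0 : n ≠ 0 := (orderOf_pos v).ne'
  have key2 : ∀ k : ℕ, zpowers (v ^ k) = zpowers (v ^ (n.gcd k)) := by
    intro k
    apply le_antisymm
    · rw [zpowers_le]
      obtain ⟨c, hc⟩ := Nat.gcd_dvd_right n k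
      refine ⟨(c : ℤ), ?_⟩
      show (v ^ n.gcd k) ^ (c : ℤ) = v ^ k
      rw [zpow_natCast, ← pow_mul, ← hc]
    · rw [zpowers_le]
      have hbez : (n.gcd k : ℤ) = n * Nat.gcdA n k + k * Nat.gcdB n k := Nat.gcd_eq_gcd_ab n k
      have hvn : (v : G) ^ (n : ℤ) = 1 := by
        rw [zpow_natCast, pow_orderOf_eq_one]
      have hcalc : (v ^ (n.gcd k) : G) = (v ^ k) ^ (Nat.gcdB n k) := by
        calc (v ^ (n.gcd k) : G) = v ^ ((n.gcd k : ℕ) : ℤ) := by rw [zpow_natCast]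
        _ = v ^ ((n : ℤ) * Nat.gcdA n k + (k : ℤ) * Nat.gcdB n k) := by rw [← hbez]
        _ = (v ^ (n : ℤ)) ^ (Nat.gcdA n k) * (v ^ ((k : ℕ) : ℤ)) ^ (Nat.gcdB n k) := by
              rw [← zpow_mul, ← zpow_mul, ← zpow_add]
        _ = (v ^ k) ^ (Nat.gcdB n k) := by rw [hvn, one_zpow, one_mul, zpow_natCast]
      rw [hcalc]
      exact zpow_mem (mem_zpowers _) _
  have key : ∀ c : G, c ∈ zpowers v → zpowers c = zpowers (v ^ (n / orderOf c)) := by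
    intro c hc
    obtain ⟨k, hk⟩ := mem_powers_iff_mem_zpowers.2 hc
    have hg : orderOf c = n / n.gcd k := by rw [← hk]; exact orderOf_pow v
    have hgd : n.gcd k ∣ n := Nat.gcd_dvd_left n k
    have hgcd : n.gcd k = n / (n / n.gcd k) := (Nat.div_div_self hgd hn0).symm
    rw [hg, ← hgcd, ← hk]
    exact key2 k
  rw [key a ha, key b hb, h]


/-- dominating vertices -/
def Dom (x : G) : Prop := ∀ w : G, w ≠ x → rpAdj G x w

lemma dom_one : Dom (1 : G) := by
  intro w hw
  left
  rw [zpowers_one_eq_bot]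
  exact bot_lt_iff_ne_bot.2 (fun h => hw (zpowers_eq_bot.1 h))

lemma dom_of_dom {π : Equiv.Perm G} (hπ : π ∈ RPAut G) {x : G} (h : Dom x) : Dom (π x) := by
  intro w hw
  obtain ⟨w', rfl⟩ := π.surjective w
  exact (hπ x w').2 (h w' (fun hh => hw (by rw [hh])))

lemma dom_structure {x : G} (h : Dom x) (hx : x ≠ 1) :
    orderOf x = 2 ∧ ∀ w : G, w ≠ 1 → w ≠ x → zpowers x < zpowers w := by
  have hx2 : x * x = 1 := by
    by_contra hcon
    have hxinv : x⁻¹ ≠ x := by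
      intro hh
      apply hcon
      nth_rewrite 1 [← hh]
      simp
    have := h x⁻¹ hxinv
    have hzeq : zpowers x⁻¹ = zpowers x := zpowers_inv
    rcases this with h1 | h1
    · rw [hzeq] at h1; exact lt_irrefl _ h1
    · rw [hzeq] at h1; exact lt_irrefl _ h1
  have ho2 : orderOf x = 2 := orderOf_eq_prime (by rw [pow_two]; exact hx2) hx
  refine ⟨ho2, ?_⟩
  intro w hw1 hwx
  rcases h w hwx with h1 | h1
  · exact h1
  · exfalso
    have := orderOf_lt_of_lt h1
    rw [ho2] at this
    interval_cases how : orderOf w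
    · exact (orderOf_pos w).ne' how
    · exact hw1 (orderOf_eq_one_iff.1 how)

lemma dom_unique {x₁ x₂ : G} (h₁ : Dom x₁) (h₂ : Dom x₂) (hx₁ : x₁ ≠ 1) (hx₂ : x₂ ≠ 1) :
    x₁ = x₂ := by
  by_contra hne
  have l1 := (dom_structure h₁ hx₁).2 x₂ hx₂ (Ne.symm hne)
  have l2 := (dom_structure h₂ hx₂).2 x₁ hx₁ hne
  exact lt_irrefl _ (l1.trans l2)

-- simEq lemmas
lemma simEq_refl (a : G) : simEq G a a := fun _ => Iff.rfl
lemma simEq_symm {a b : G} (h : simEq G a b) : simEq G b a := fun z => (h z).symm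
lemma simEq_trans {a b c : G} (h : simEq G a b) (h' : simEq G b c) : simEq G a c :=
  fun z => (h z).trans (h' z)

lemma simEq_not_adj {a b : G} (h : simEq G a b) : ¬ rpAdj G a b := by
  intro hadj
  exact adj_irrefl b ((h b).1 hadj)

lemma simEq_down {a b : G} (h : simEq G a b) {z : G} (hz : zpowers z < zpowers a) :
    zpowers z < zpowers b := by
  have hadj : rpAdj G b z := (h z).1 (adj_of_lt hz)
  rcases hadj with h1 | h1
  · exact absurd (Or.inr (h1.trans hz)) (simEq_not_adj h)
  · exact h1

lemma simEq_up {a b : G} (h : simEq G a b) {z : G} (hz : zpowers a < zpowers z) :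
    zpowers b < zpowers z := by
  have hadj : rpAdj G b z := (h z).1 (Or.inl hz)
  rcases hadj with h1 | h1
  · exact h1
  · exfalso
    exact simEq_not_adj h (Or.inl (hz.trans h1))

lemma genCls_subset_hatCls (a : G) : genCls G a ⊆ hatCls G a := by
  intro z hz
  intro w
  unfold rpAdj
  rw [show zpowers z = zpowers a from hz]

lemma simEq_ne_one {a b : G} (h : simEq G b a) (ha : a ≠ 1) : b ≠ 1 := by
  rintro rfl
  -- 1 ≃ a with a ≠ 1 : but 1 is adjacent to a
  apply simEq_not_adj h
  exact dom_one a ha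

lemma simEq_not_dom {a b : G} (h : simEq G b a) (hb : Dom b) : b = a := by
  by_contra hne
  exact simEq_not_adj h (hb a (fun hh => hne hh.symm))

-- automorphism and simEq
lemma aut_simEq {π : Equiv.Perm G} (hπ : π ∈ RPAut G) {a b : G} (h : simEq G a b) :
    simEq G (π a) (π b) := by
  intro z
  obtain ⟨w, rfl⟩ := π.surjective z
  exact ((hπ a w).trans (h w)).trans (hπ b w).symm

lemma image_hatCls {π : Equiv.Perm G} (hπ : π ∈ RPAut G) (a : G) :
    π '' hatCls G a = hatCls G (π a) := by
  ext z
  constructor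
  · rintro ⟨w, hw, rfl⟩
    exact aut_simEq hπ hw
  · intro hz
    obtain ⟨w, rfl⟩ := π.surjective z
    refine ⟨w, ?_, rfl⟩
    have hπ' : π⁻¹ ∈ RPAut G := (RPAut G).inv_mem hπ
    have := aut_simEq hπ' hz
    simp at this; exact this


lemma ncard_coe_zpowers (a : G) : ((zpowers a : Subgroup G) : Set G).ncard = orderOf a := by
  rw [← Nat.card_zpowers a]
  exact (Nat.card_coe_set_eq _).symm

lemma genCls_eq (a : G) :
    genCls G a = {z : G | z ∈ zpowers a ∧ orderOf z = orderOf a} := by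
  ext z
  simp only [genCls, Set.mem_setOf_eq]
  constructor
  · intro hz
    refine ⟨by rw [← hz]; exact mem_zpowers z, ?_⟩
    rw [← Nat.card_zpowers z, ← Nat.card_zpowers a, hz]
  · rintro ⟨hmem, hord⟩
    apply SetLike.coe_injective
    apply Set.eq_of_subset_of_ncard_le
    · exact SetLike.coe_subset_coe.2 (zpowers_le.2 hmem)
    · rw [ncard_coe_zpowers, ncard_coe_zpowers, hord]
    · exact Set.toFinite _

lemma ncard_genCls (a : G) : (genCls G a).ncard = Nat.totient (orderOf a) := by
  classical
  haveI : IsCyclic (zpowers a) := isCyclic_zpowers a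
  have hset : genCls G a = Subtype.val '' {u : (zpowers a) | orderOf u = orderOf a} := by
    rw [genCls_eq]
    ext z
    simp only [Set.mem_image, Set.mem_setOf_eq]
    constructor
    · rintro ⟨hmem, hord⟩
      exact ⟨⟨z, hmem⟩, by rwa [orderOf_mk], rfl⟩
    · rintro ⟨⟨u, hu⟩, hord, rfl⟩
      exact ⟨hu, by rwa [orderOf_mk] at hord⟩
  rw [hset, Set.ncard_image_of_injective _ Subtype.val_injective]
  rw [Set.ncard_eq_toFinset_card']
  have htot := IsCyclic.card_orderOf_eq_totient (α := zpowers a)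
    (d := orderOf a) (by rw [Fintype.card_zpowers])
  rw [← htot]
  congr 1
  ext u
  simp

lemma downSet_eq (a : G) :
    {z : G | zpowers z < zpowers a} = ((zpowers a : Subgroup G) : Set G) \ genCls G a := by
  ext z
  simp only [Set.mem_setOf_eq, Set.mem_diff, SetLike.mem_coe, genCls, Set.mem_setOf_eq]
  constructor
  · intro h
    exact ⟨zpowers_le.1 h.le, h.ne⟩
  · rintro ⟨hmem, hne⟩
    exact lt_of_le_of_ne (zpowers_le.2 hmem) hne

lemma ncard_downSet (a : G) :
    {z : G | zpowers z < zpowers a}.ncard = orderOf a - Nat.totient (orderOf a) := by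
  rw [downSet_eq]
  rw [Set.ncard_diff ?hsub (Set.toFinite _)]
  · rw [ncard_coe_zpowers, ncard_genCls]
  case hsub =>
    intro z hz
    show z ∈ zpowers a
    rw [← (show zpowers z = zpowers a from hz)]
    exact mem_zpowers z

/-- core lemma: two `≃`-equivalent elements with different orders have prime order -/
lemma pair_prime {b₁ b₂ : G} (h : simEq G b₁ b₂) (hne : orderOf b₁ ≠ orderOf b₂)
    (h1 : b₁ ≠ 1) (h2 : b₂ ≠ 1) : (orderOf b₁).Prime := by
  have hzne : zpowers b₁ ≠ zpowers b₂ := by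
    intro hh; apply hne
    rw [← Nat.card_zpowers b₁, ← Nat.card_zpowers b₂, hh]
  have hD : {z : G | zpowers z < zpowers b₁} = {z : G | zpowers z < zpowers b₂} := by
    ext z
    exact ⟨fun hz => simEq_down h hz, fun hz => simEq_down (simEq_symm h) hz⟩
  set n₁ := orderOf b₁ with hn₁
  have hn₁pos : 0 < n₁ := orderOf_pos b₁
  have hn₁ne1 : n₁ ≠ 1 := fun hh => h1 (orderOf_eq_one_iff.1 hh)
  -- (i) n₁ has a unique prime divisor
  have huniq : ∀ p q : ℕ, p.Prime → q.Prime → p ∣ n₁ → q ∣ n₁ → p = q := by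
    intro p q hp hq hpn hqn
    by_contra hpq
    have hmem : ∀ r : ℕ, r.Prime → r ∣ n₁ → b₁ ^ r ∈ zpowers b₂ := by
      intro r hr hrn
      have hlt : zpowers (b₁ ^ r) < zpowers b₁ := by
        apply lt_of_le_of_ne (zpowers_le.2 (pow_mem (mem_zpowers b₁) r))
        intro hh
        have : orderOf (b₁ ^ r) = n₁ := by
          rw [← Nat.card_zpowers, hh, Nat.card_zpowers]
        rw [orderOf_pow, Nat.gcd_eq_right hrn, ← hn₁] at this
        have hr2 := hr.two_le
        have : n₁ / r < n₁ := Nat.div_lt_self hn₁pos hr2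
        omega
      have : b₁ ^ r ∈ {z : G | zpowers z < zpowers b₂} := by rw [← hD]; exact hlt
      exact zpowers_le.1 (le_of_lt this)
    have hp' := hmem p hp hpn
    have hq' := hmem q hq hqn
    -- Bezout: b₁ ∈ zpowers b₂
    have hcop : Nat.gcd p q = 1 := (Nat.coprime_primes hp hq).2 hpq
    have hbez : (1 : ℤ) = p * Nat.gcdA p q + q * Nat.gcdB p q := by
      rw [← Nat.cast_one, ← hcop]; exact Nat.gcd_eq_gcd_ab p q
    have hb₁mem : b₁ ∈ zpowers b₂ := by
      have : b₁ = (b₁ ^ p) ^ (Nat.gcdA p q) * (b₁ ^ q) ^ (Nat.gcdB p q) := by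
        rw [← zpow_natCast b₁ p, ← zpow_natCast b₁ q, ← zpow_mul, ← zpow_mul, ← zpow_add,
          ← hbez, zpow_one]
      rw [this]
      exact mul_mem (zpow_mem hp' _) (zpow_mem hq' _)
    have hlt : zpowers b₁ < zpowers b₂ := lt_of_le_of_ne (zpowers_le.2 hb₁mem) hzne
    exact simEq_not_adj h (Or.inl hlt)
  -- so n₁ = p ^ e
  obtain ⟨p, hp, hpn⟩ := Nat.exists_prime_and_dvd hn₁ne1
  have heq : n₁ = p ^ n₁.primeFactorsList.length :=
    Nat.eq_prime_pow_of_unique_prime_dvd hn₁pos.ne'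
      (fun {d} hd hdn => huniq d p hd hp hdn hpn)
  set e := n₁.primeFactorsList.length with he
  have he1 : 1 ≤ e := by
    by_contra hcon
    push_neg at hcon
    interval_cases e
    · simp at heq; omega
  -- symmetric data for b₂
  set n₂ := orderOf b₂ with hn₂
  have hn₂pos : 0 < n₂ := orderOf_pos b₂
  have hn₂ne1 : n₂ ≠ 1 := fun hh => h2 (orderOf_eq_one_iff.1 hh)
  have huniq₂ : ∀ r s : ℕ, r.Prime → s.Prime → r ∣ n₂ → s ∣ n₂ → r = s := by
    intro r s hr hs hrn hsn
    -- apply huniq-type argument with roles swapped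
    by_contra hrs
    have hmem : ∀ u : ℕ, u.Prime → u ∣ n₂ → b₂ ^ u ∈ zpowers b₁ := by
      intro u hu hun
      have hlt : zpowers (b₂ ^ u) < zpowers b₂ := by
        apply lt_of_le_of_ne (zpowers_le.2 (pow_mem (mem_zpowers b₂) u))
        intro hh
        have : orderOf (b₂ ^ u) = n₂ := by
          rw [← Nat.card_zpowers, hh, Nat.card_zpowers]
        rw [orderOf_pow, Nat.gcd_eq_right hun, ← hn₂] at this
        have hu2 := hu.two_le
        have : n₂ / u < n₂ := Nat.div_lt_self hn₂pos hu2
        omega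
      have : b₂ ^ u ∈ {z : G | zpowers z < zpowers b₁} := by rw [hD]; exact hlt
      exact zpowers_le.1 (le_of_lt this)
    have hr' := hmem r hr hrn
    have hs' := hmem s hs hsn
    have hcop : Nat.gcd r s = 1 := (Nat.coprime_primes hr hs).2 hrs
    have hbez : (1 : ℤ) = r * Nat.gcdA r s + s * Nat.gcdB r s := by
      rw [← Nat.cast_one, ← hcop]; exact Nat.gcd_eq_gcd_ab r s
    have hb₂mem : b₂ ∈ zpowers b₁ := by
      have : b₂ = (b₂ ^ r) ^ (Nat.gcdA r s) * (b₂ ^ s) ^ (Nat.gcdB r s) := by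
        rw [← zpow_natCast b₂ r, ← zpow_natCast b₂ s, ← zpow_mul, ← zpow_mul, ← zpow_add,
          ← hbez, zpow_one]
      rw [this]
      exact mul_mem (zpow_mem hr' _) (zpow_mem hs' _)
    have hlt : zpowers b₂ < zpowers b₁ := lt_of_le_of_ne (zpowers_le.2 hb₂mem) (Ne.symm hzne)
    exact simEq_not_adj h (Or.inr hlt)
  obtain ⟨q, hq, hqn⟩ := Nat.exists_prime_and_dvd hn₂ne1
  have heq₂ : n₂ = q ^ n₂.primeFactorsList.length :=
    Nat.eq_prime_pow_of_unique_prime_dvd hn₂pos.ne'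
      (fun {d} hd hdn => huniq₂ d q hd hq hdn hqn)
  set f := n₂.primeFactorsList.length with hf
  have hf1 : 1 ≤ f := by
    by_contra hcon
    push_neg at hcon
    interval_cases f
    · simp at heq₂; omega
  -- card of common down-set
  have hcard : n₁ - Nat.totient n₁ = n₂ - Nat.totient n₂ := by
    rw [← ncard_downSet b₁, ← ncard_downSet b₂, hD]
  have hc₁ : n₁ - Nat.totient n₁ = p ^ (e - 1) := by
    rw [heq, Nat.totient_prime_pow hp he1]
    have hpp : p ^ e = p ^ (e - 1) * p := by
      rw [← pow_succ]
      congr 1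
      omega
    rw [hpp]
    have hP : p ^ (e-1) * p = p ^ (e-1) * (p-1) + p ^ (e-1) := by
      rw [← Nat.mul_succ]
      congr 1
      have := hp.two_le
      omega
    omega
  have hc₂ : n₂ - Nat.totient n₂ = q ^ (f - 1) := by
    rw [heq₂, Nat.totient_prime_pow hq hf1]
    have hpp : q ^ f = q ^ (f - 1) * q := by
      rw [← pow_succ]
      congr 1
      omega
    rw [hpp]
    have hP : q ^ (f-1) * q = q ^ (f-1) * (q-1) + q ^ (f-1) := by
      rw [← Nat.mul_succ]
      congr 1
      have := hq.two_le
      omega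
    omega
  -- conclude e = 1
  rcases Nat.lt_or_ge e 2 with he2 | he2
  · have : e = 1 := by omega
    rw [heq, this, pow_one]
    exact hp
  exfalso
  have hkey : p ^ (e - 1) = q ^ (f - 1) := by omega
  rcases Nat.lt_or_ge f 2 with hf2 | hf2
  · have : f = 1 := by omega
    rw [this] at hkey
    simp at hkey
    have : p ^ (e-1) ≥ p := by
      calc p = p ^ 1 := (pow_one p).symm
      _ ≤ p ^ (e-1) := Nat.pow_le_pow_right (by have := hp.two_le; omega) (by omega)
    have := hp.two_le
    omega
  · -- p = q and e = f
    have hpq : p = q := by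
      have hdvd : p ∣ q ^ (f - 1) := hkey ▸ dvd_pow_self p (by omega : e - 1 ≠ 0)
      exact (Nat.prime_dvd_prime_iff_eq hp hq).1 (hp.dvd_of_dvd_pow hdvd)
    subst hpq
    have hef : e - 1 = f - 1 := Nat.pow_right_injective hp.two_le hkey
    apply hne
    rw [heq, heq₂]
    congr 1
    omega


lemma hat_dichotomy {a : G} (ha : a ≠ 1) :
    (∀ z, simEq G z a → orderOf z = orderOf a) ∨ (∀ z, simEq G z a → (orderOf z).Prime) := by
  by_cases hall : ∀ z, simEq G z a → orderOf z = orderOf a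
  · exact Or.inl hall
  · right
    push_neg at hall
    obtain ⟨z₀, hz₀, hz₀ne⟩ := hall
    intro z hz
    have hz1 : z ≠ 1 := simEq_ne_one hz ha
    have hz₀1 : z₀ ≠ 1 := simEq_ne_one hz₀ ha
    by_cases h : orderOf z = orderOf a
    · exact pair_prime (simEq_trans hz (simEq_symm hz₀))
        (by rw [h]; exact fun hh => hz₀ne hh.symm) hz1 hz₀1
    · exact pair_prime hz h hz1 ha

lemma hat_lt {a z v : G} (hz : simEq G z a) (hv : zpowers a < zpowers v) :
    zpowers z < zpowers v := simEq_up (simEq_symm hz) hv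

lemma hat_eq_genCls_of_below {a v : G}
    (hpure : ∀ z, simEq G z a → orderOf z = orderOf a) (hv : zpowers a < zpowers v) :
    hatCls G a = genCls G a := by
  apply Set.Subset.antisymm
  · intro z hz
    have h1 : zpowers z < zpowers v := hat_lt hz hv
    show zpowers z = zpowers a
    exact zpowers_eq_of_orderOf_eq (zpowers_le.1 h1.le) (zpowers_le.1 hv.le) (hpure z hz)
  · exact genCls_subset_hatCls a

/-- a pure class has cardinality `phi(orderOf a) * s` for some `s >= 1`. -/
lemma hat_pure_card {a : G}
    (hpure : ∀ z, simEq G z a → orderOf z = orderOf a) :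
    ∃ s : ℕ, 1 ≤ s ∧ (hatCls G a).ncard = Nat.totient (orderOf a) * s := by
  classical
  set T := (hatCls G a).toFinset with hT
  have haT : a ∈ T := by rw [hT, Set.mem_toFinset]; exact simEq_refl a
  set I := T.image (fun z => zpowers z) with hI
  have hcard : T.card = ∑ H ∈ I, (T.filter (fun z => zpowers z = H)).card :=
    Finset.card_eq_sum_card_fiberwise (fun x hx => Finset.mem_image_of_mem _ hx)
  have hfiber : ∀ H ∈ I, (T.filter (fun z => zpowers z = H)).card = Nat.totient (orderOf a) := by
    intro H hH
    obtain ⟨u, huT, huH⟩ := Finset.mem_image.1 hH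
    have hu_sim : simEq G u a := by rwa [hT, Set.mem_toFinset] at huT
    have hfe : (T.filter (fun z => zpowers z = H)) = (genCls G u).toFinset := by
      ext z
      simp only [Finset.mem_filter, Set.mem_toFinset, hT]
      constructor
      · rintro ⟨hzT, hzH⟩
        show zpowers z = zpowers u
        rw [hzH, huH]
      · intro hz
        have hz' : zpowers z = zpowers u := hz
        exact ⟨simEq_trans (genCls_subset_hatCls u hz) hu_sim, by rw [hz', huH]⟩
    rw [hfe, ← Set.ncard_eq_toFinset_card', ncard_genCls, hpure u hu_sim]
  have hTcard : (hatCls G a).ncard = T.card := Set.ncard_eq_toFinset_card' _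
  refine ⟨I.card, Finset.card_pos.2 ⟨zpowers a, Finset.mem_image_of_mem _ haT⟩, ?_⟩
  rw [hTcard, hcard, Finset.sum_congr rfl hfiber, Finset.sum_const, smul_eq_mul, mul_comm]

/-- a prime class sitting below `v` has cardinality `∑ (q-1)` over a set of primes dividing
`orderOf v`. -/
lemma hat_prime_card {a v : G} (ha : a ≠ 1)
    (hprime : ∀ z, simEq G z a → (orderOf z).Prime) (hv : zpowers a < zpowers v) :
    ∃ Q : Finset ℕ, (∀ q ∈ Q, q.Prime ∧ q ∣ orderOf v) ∧ orderOf a ∈ Q ∧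
      (hatCls G a).ncard = ∑ q ∈ Q, (q - 1) := by
  classical
  set T := (hatCls G a).toFinset with hT
  have haT : a ∈ T := by rw [hT, Set.mem_toFinset]; exact simEq_refl a
  set Q := T.image orderOf with hQ
  have hmemQ : ∀ q ∈ Q, ∃ u, simEq G u a ∧ orderOf u = q := by
    intro q hq
    obtain ⟨u, huT, huq⟩ := Finset.mem_image.1 hq
    exact ⟨u, by rwa [hT, Set.mem_toFinset] at huT, huq⟩
  refine ⟨Q, ?_, Finset.mem_image_of_mem _ haT, ?_⟩
  · intro q hq
    obtain ⟨u, hu, rfl⟩ := hmemQ q hq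
    exact ⟨hprime u hu, orderOf_dvd_of_le (hat_lt hu hv).le⟩
  · have hcard : T.card = ∑ q ∈ Q, (T.filter (fun z => orderOf z = q)).card :=
      Finset.card_eq_sum_card_fiberwise (fun x hx => Finset.mem_image_of_mem _ hx)
    have hfiber : ∀ q ∈ Q, (T.filter (fun z => orderOf z = q)).card = q - 1 := by
      intro q hq
      obtain ⟨u, hu, huq⟩ := hmemQ q hq
      have hqprime : q.Prime := huq ▸ hprime u hu
      have hulv : zpowers u < zpowers v := hat_lt hu hv
      have hfe : (T.filter (fun z => orderOf z = q)) =
          (((zpowers u : Subgroup G) : Set G) \ {1}).toFinset := by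
        ext z
        simp only [Finset.mem_filter, Set.mem_toFinset, hT, Set.mem_diff,
          SetLike.mem_coe, Set.mem_singleton_iff]
        constructor
        · rintro ⟨hzT, hzq⟩
          have hzsim : simEq G z a := hzT
          have hzlv : zpowers z < zpowers v := hat_lt hzsim hv
          have hzz : zpowers z = zpowers u :=
            zpowers_eq_of_orderOf_eq (zpowers_le.1 hzlv.le) (zpowers_le.1 hulv.le)
              (by rw [hzq, huq])
          exact ⟨by rw [← hzz]; exact mem_zpowers z, simEq_ne_one hzsim ha⟩
        · rintro ⟨hzmem, hz1⟩
          have hzord : orderOf z = q := by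
            have hdvd : orderOf z ∣ orderOf u := orderOf_dvd_of_mem_zpowers hzmem
            rw [huq] at hdvd
            rcases Nat.Prime.eq_one_or_self_of_dvd hqprime _ hdvd with h1 | h1
            · exact absurd (orderOf_eq_one_iff.1 h1) hz1
            · exact h1
          have hzz : zpowers z = zpowers u :=
            zpowers_eq_of_orderOf_eq hzmem (mem_zpowers u) (by rw [hzord, huq])
          exact ⟨simEq_trans (genCls_subset_hatCls u hzz) hu, hzord⟩
      rw [hfe, ← Set.ncard_eq_toFinset_card']
      have h1mem : (1 : G) ∈ ((zpowers u : Subgroup G) : Set G) := one_mem _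
      rw [Set.ncard_diff_singleton_of_mem h1mem, ncard_coe_zpowers, huq]
    rw [Set.ncard_eq_toFinset_card', hcard]
    exact Finset.sum_congr rfl hfiber

lemma ncard_hat_image {π : Equiv.Perm G} (hπ : π ∈ RPAut G) (a : G) :
    (hatCls G (π a)).ncard = (hatCls G a).ncard := by
  rw [← image_hatCls hπ a]
  exact Set.ncard_image_of_injective _ π.injective


lemma ne_one_of_not_dom {z : G} (h : ¬ Dom z) : z ≠ 1 := by
  rintro rfl; exact h dom_one

lemma eq_one_of_lt_prime {y z : G} (hyp : (orderOf y).Prime) (h : zpowers z < zpowers y) :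
    z = 1 := by
  have hdvd : orderOf z ∣ orderOf y := orderOf_dvd_of_le h.le
  have hlt : orderOf z < orderOf y := orderOf_lt_of_lt h
  rcases hyp.eq_one_or_self_of_dvd _ hdvd with h1 | h1
  · exact orderOf_eq_one_iff.1 h1
  · omega

/-- if some non-dominating element has odd order or prime order, there is no non-trivial
dominating element -/
lemma dom_eq_one_of_odd {y : G} (hyD : ¬ Dom y) (hyodd : Odd (orderOf y)) :
    ∀ z : G, Dom z → z = 1 := by
  intro z hz
  by_contra hz1
  obtain ⟨ho2, hlt⟩ := dom_structure hz hz1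
  have hy1 : y ≠ 1 := ne_one_of_not_dom hyD
  have hyz : y ≠ z := by rintro rfl; exact hyD hz
  have h := hlt y hy1 hyz
  have : orderOf z ∣ orderOf y := orderOf_dvd_of_le h.le
  rw [ho2] at this
  rcases hyodd with ⟨c, hc⟩
  omega

lemma dom_eq_one_of_prime {y : G} (hyD : ¬ Dom y) (hyp : (orderOf y).Prime) :
    ∀ z : G, Dom z → z = 1 := by
  by_cases h2 : orderOf y = 2
  · intro z hz
    by_contra hz1
    obtain ⟨ho2, hlt⟩ := dom_structure hz hz1
    have hy1 : y ≠ 1 := ne_one_of_not_dom hyD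
    have hyz : y ≠ z := by rintro rfl; exact hyD hz
    have h := hlt y hy1 hyz
    have hlt2 := orderOf_lt_of_lt h
    rw [ho2, h2] at hlt2
    omega
  · exact dom_eq_one_of_odd hyD (hyp.odd_of_ne_two h2)

lemma zpowers_pow_lt {x : G} (k : ℕ) (h : orderOf (x ^ k) < orderOf x) :
    zpowers (x ^ k) < zpowers x := by
  apply lt_of_le_of_ne (zpowers_le.2 (pow_mem (mem_zpowers x) k))
  intro hh
  have : orderOf (x ^ k) = orderOf x := by
    rw [← Nat.card_zpowers, hh, Nat.card_zpowers]
  omega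

lemma orderOf_pow_half {x : G} {m : ℕ} (h : orderOf x = 2 * m) (hm : 0 < m) :
    orderOf (x ^ m) = 2 := by
  rw [orderOf_pow, h]
  have hg : Nat.gcd (2 * m) m = m := Nat.gcd_eq_right ⟨2, by ring⟩
  rw [hg]
  exact Nat.mul_div_cancel _ hm

lemma not_prime_of_mid {m n : ℕ} (h1 : 1 < m) (h2 : m < n) (hd : m ∣ n) : ¬ n.Prime := by
  intro hp
  rcases hp.eq_one_or_self_of_dvd _ hd with h | h <;> omega

open RPNT RPNT2 in
/-- THE KILL: given a reversed configuration whose lower class is a prime class and whose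
image upper element `π y` has even order `> 2`, derive a contradiction via the involution
inside `⟨π y⟩`. -/
lemma kill {π : Equiv.Perm G} (hπ : π ∈ RPAut G) {y : G}
    (hyD : ¬ Dom y)
    (hyp : ∀ z, simEq G z y → (orderOf z).Prime)
    (hn'even : Even (orderOf (π y))) (hn'2 : 2 < orderOf (π y)) : False := by
  classical
  have hy1 : y ≠ 1 := ne_one_of_not_dom hyD
  have hπ' : π⁻¹ ∈ RPAut G := (RPAut G).inv_mem hπ
  set y' := π y with hy'
  set n' := orderOf y' with hn'
  obtain ⟨m', hm'⟩ : ∃ m', n' = 2 * m' := by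
    rcases hn'even with ⟨c, hc⟩; exact ⟨c, by omega⟩
  have hm'pos : 0 < m' := by omega
  set τ := y' ^ m' with hτ
  have hoτ : orderOf τ = 2 := orderOf_pow_half hm' hm'pos
  have hτ1 : τ ≠ 1 := by
    intro hh
    rw [hh, orderOf_one] at hoτ
    omega
  have hττ : zpowers τ < zpowers y' := by
    rw [hτ]
    apply zpowers_pow_lt
    rw [← hτ, hoτ]
    omega
  have noT : ∀ z : G, Dom z → z = 1 := dom_eq_one_of_prime hyD (hyp y (simEq_refl y))
  set v := π⁻¹ τ with hv
  have hπv : π v = τ := by rw [hv]; exact π.apply_symm_apply τ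
  have hv1 : v ≠ 1 := by
    intro hh
    apply hτ1
    rw [← hπv, hh]
    exact noT (π 1) (dom_of_dom hπ dom_one)
  have hadj : rpAdj G y v := by
    have h0 : rpAdj G y' τ := Or.inr hττ
    have := (hπ' y' τ).2 h0
    rw [hy', Equiv.Perm.coe_inv, Equiv.symm_apply_apply] at this
    rw [hv]
    exact this
  have hyv : zpowers y < zpowers v := by
    rcases hadj with h | h
    · exact h
    · exact absurd (eq_one_of_lt_prime (hyp y (simEq_refl y)) h) hv1
  -- the class of v is pure with order ≥ 3, hence has even cardinality
  have hov3 : 2 < orderOf v := by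
    have h1 := orderOf_lt_of_lt hyv
    have h2 := (hyp y (simEq_refl y)).two_le
    omega
  have hVpure : ∀ z, simEq G z v → orderOf z = orderOf v := by
    rcases hat_dichotomy hv1 with h | h
    · exact h
    · exfalso
      have hvp := h v (simEq_refl v)
      have hdvd : orderOf y ∣ orderOf v := orderOf_dvd_of_le hyv.le
      have hlt := orderOf_lt_of_lt hyv
      have h2 := (hyp y (simEq_refl y)).two_le
      rcases hvp.eq_one_or_self_of_dvd _ hdvd with h | h <;> omega
  have hVeven : Even (hatCls G v).ncard := by
    obtain ⟨s, hs1, hs⟩ := hat_pure_card hVpure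
    rw [hs]
    exact (Nat.totient_even hov3).mul_right s
  -- the class of τ is a prime class below y', with odd cardinality
  have hτprime : ∀ z, simEq G z τ → (orderOf z).Prime := by
    rcases hat_dichotomy hτ1 with h | h
    · intro z hz
      rw [h z hz, hoτ]
      exact Nat.prime_two
    · exact h
  obtain ⟨Q, hQ, h2Q, hQcard⟩ := hat_prime_card hτ1 hτprime hττ
  have hτodd : Odd (hatCls G τ).ncard := by
    rw [hQcard]
    exact odd_sum_of_two_mem (fun q hq => (hQ q hq).1) (by rwa [hoτ] at h2Q)
  have hcards : (hatCls G τ).ncard = (hatCls G v).ncard := by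
    rw [← hπv]
    exact ncard_hat_image hπ v
  rw [hcards] at hτodd
  exact (Nat.not_odd_iff_even.2 hVeven) hτodd


open RPNT RPNT2 in
lemma no_reversal_primecase {π : Equiv.Perm G} (hπ : π ∈ RPAut G) {x y : G}
    (hxD : ¬ Dom x) (hyD : ¬ Dom y) (hx'D : ¬ Dom (π x)) (hy'D : ¬ Dom (π y))
    (hyx : zpowers y < zpowers x) (hrev : zpowers (π x) < zpowers (π y))
    (hyp : ∀ z, simEq G z y → (orderOf z).Prime) : False := by
  classical
  have hx1 : x ≠ 1 := ne_one_of_not_dom hxD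
  have hy1 : y ≠ 1 := ne_one_of_not_dom hyD
  set x' := π x with hx'd
  set y' := π y with hy'd
  have hx'1 : x' ≠ 1 := ne_one_of_not_dom hx'D
  have hy'1 : y' ≠ 1 := ne_one_of_not_dom hy'D
  set n := orderOf x with hn
  set n' := orderOf y' with hn'
  set k := orderOf x' with hk
  have hk2 : 2 ≤ k := by
    have h1 := orderOf_pos x'
    have h2 : k ≠ 1 := fun hh => hx'1 (orderOf_eq_one_iff.1 hh)
    omega
  have hoy2 : 2 ≤ orderOf y := (hyp y (simEq_refl y)).two_le
  have hmn : orderOf y ∣ n ∧ orderOf y < n := ⟨orderOf_dvd_of_le hyx.le, orderOf_lt_of_lt hyx⟩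
  have hkn' : k ∣ n' ∧ k < n' := ⟨orderOf_dvd_of_le hrev.le, orderOf_lt_of_lt hrev⟩
  have hncomp : ¬ n.Prime := not_prime_of_mid (by omega) hmn.2 hmn.1
  have hn'comp : ¬ n'.Prime := not_prime_of_mid (by omega) hkn'.2 hkn'.1
  have hn2 : 2 < n := by omega
  have hn'2 : 2 < n' := by omega
  have hφn_even : Even (Nat.totient n) := Nat.totient_even hn2
  have hφn'_even : Even (Nat.totient n') := Nat.totient_even hn'2
  have hφn_pos : 0 < Nat.totient n := Nat.totient_pos.2 (by omega)
  have hφn'_pos : 0 < Nat.totient n' := Nat.totient_pos.2 (by omega)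
  have hXpure : ∀ z, simEq G z x → orderOf z = n := by
    rcases hat_dichotomy hx1 with h | h
    · exact h
    · exact absurd (eq_one_of_lt_prime (h x (simEq_refl x)) hyx) hy1
  have hY'pure : ∀ z, simEq G z y' → orderOf z = n' := by
    rcases hat_dichotomy hy'1 with h | h
    · exact h
    · exact absurd (eq_one_of_lt_prime (h y' (simEq_refl y')) hrev) hx'1
  obtain ⟨P, hP, hyP, hcardB⟩ := hat_prime_card hy1 hyp hyx
  have himgY : (hatCls G y').ncard = (hatCls G y).ncard := ncard_hat_image hπ y
  have hgenY' : Nat.totient n' ≤ (hatCls G y').ncard := by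
    rw [← ncard_genCls y']
    exact Set.ncard_le_ncard (genCls_subset_hatCls y') (Set.toFinite _)
  have hNT4P : (∑ q ∈ P, (q-1)) ≤ Nat.totient n + 1 :=
    sum_sub_one_le_totient (by omega) hP
  have hchain1 : Nat.totient n' ≤ Nat.totient n := by
    have h1 : Nat.totient n' ≤ Nat.totient n + 1 := by
      calc Nat.totient n' ≤ (hatCls G y').ncard := hgenY'
      _ = (hatCls G y).ncard := himgY
      _ = ∑ q ∈ P, (q-1) := hcardB
      _ ≤ Nat.totient n + 1 := hNT4P
    rcases hφn_even with ⟨c, hc⟩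
    rcases hφn'_even with ⟨d, hd⟩
    omega
  obtain ⟨sA, hsA1, hcardA⟩ := hat_pure_card hXpure
  have himgX : (hatCls G x').ncard = (hatCls G x).ncard := ncard_hat_image hπ x
  rcases hat_dichotomy hx'1 with hWpure | hWprime
  · -- lower image class is pure : P-C case
    have hWgen : hatCls G x' = genCls G x' := hat_eq_genCls_of_below hWpure hrev
    have hcardW : (hatCls G x').ncard = Nat.totient k := by
      rw [hWgen, ncard_genCls]
    have hprod : Nat.totient n * sA = Nat.totient k := by
      rw [← hcardA, ← himgX]; exact hcardW
    have hφnk : Nat.totient n ≤ Nat.totient k := by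
      have hle : Nat.totient n ≤ Nat.totient n * sA := Nat.le_mul_of_pos_right _ (by omega)
      omega
    have hφkn' : Nat.totient k ≤ Nat.totient n' :=
      totient_le_of_dvd hkn'.1 (by omega)
    have heqkn' : Nat.totient n' = Nat.totient k := by omega
    obtain ⟨h2k, hkodd⟩ := totient_eq_of_dvd_lt (by omega) hkn'.1 hkn'.2 heqkn'
    have hev : Even n' := ⟨k, by omega⟩
    exact kill hπ hyD hyp hev hn'2
  · -- both prime classes : P-P case
    obtain ⟨Q, hQ, hx'Q, hcardW⟩ := hat_prime_card hx'1 hWprime hrev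
    have hkey : Nat.totient n * sA = ∑ q ∈ Q, (q-1) := by
      rw [← hcardA, ← himgX]; exact hcardW
    have hNT4Q : (∑ q ∈ Q, (q-1)) ≤ Nat.totient n' + 1 :=
      sum_sub_one_le_totient (by omega) hQ
    have hφnn' : Nat.totient n ≤ Nat.totient n' := by
      have hle : Nat.totient n ≤ Nat.totient n * sA := Nat.le_mul_of_pos_right _ (by omega)
      rcases hφn_even with ⟨c, hc⟩
      rcases hφn'_even with ⟨d, hd⟩
      omega
    have hΦ : Nat.totient n = Nat.totient n' := le_antisymm hφnn' hchain1
    have hφ2 : 2 ≤ Nat.totient n := by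
      rcases hφn_even with ⟨c, hc⟩; omega
    have hsA : sA = 1 := by
      by_contra hne
      have h2 : 2 ≤ sA := by omega
      have hmul : Nat.totient n * 2 ≤ Nat.totient n * sA := Nat.mul_le_mul_left _ h2
      omega
    have hsum : (∑ q ∈ Q, (q-1)) = Nat.totient n' := by
      rw [← hkey, hsA, hΦ, mul_one]
    have hev : Even n' := even_of_sum_sub_one_eq_totient (by omega) hn'comp hQ hsum
    exact kill hπ hyD hyp hev hn'2

open RPNT RPNT2 in
lemma no_reversal {π : Equiv.Perm G} (hπ : π ∈ RPAut G) {x y : G}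
    (hxD : ¬ Dom x) (hyD : ¬ Dom y) (hx'D : ¬ Dom (π x)) (hy'D : ¬ Dom (π y))
    (hyx : zpowers y < zpowers x) (hrev : zpowers (π x) < zpowers (π y)) : False := by
  classical
  have hπ' : π⁻¹ ∈ RPAut G := (RPAut G).inv_mem hπ
  have hx1 : x ≠ 1 := ne_one_of_not_dom hxD
  have hy1 : y ≠ 1 := ne_one_of_not_dom hyD
  have hx'1 : π x ≠ 1 := ne_one_of_not_dom hx'D
  have hy'1 : π y ≠ 1 := ne_one_of_not_dom hy'D
  rcases hat_dichotomy hy1 with hBpure | hBprime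
  swap
  · exact no_reversal_primecase hπ hxD hyD hx'D hy'D hyx hrev hBprime
  rcases hat_dichotomy hx'1 with hWpure | hWprime
  swap
  · -- apply the prime case to the inverse configuration
    refine no_reversal_primecase (x := π y) (y := π x) hπ' hy'D hx'D ?_ ?_ hrev ?_ hWprime
    · rwa [Equiv.Perm.coe_inv, Equiv.symm_apply_apply]
    · rwa [Equiv.Perm.coe_inv, Equiv.symm_apply_apply]
    · rw [Equiv.Perm.coe_inv, Equiv.symm_apply_apply, Equiv.symm_apply_apply]
      exact hyx
  -- C-C case
  set x' := π x with hx'd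
  set y' := π y with hy'd
  set m := orderOf y with hm
  set n := orderOf x with hn
  set n' := orderOf y' with hn'
  set k := orderOf x' with hk
  have hm2 : 2 ≤ m := by
    have h1 := orderOf_pos y
    have h2 : m ≠ 1 := fun hh => hy1 (orderOf_eq_one_iff.1 hh)
    omega
  have hk2 : 2 ≤ k := by
    have h1 := orderOf_pos x'
    have h2 : k ≠ 1 := fun hh => hx'1 (orderOf_eq_one_iff.1 hh)
    omega
  have hmn : m ∣ n ∧ m < n := ⟨orderOf_dvd_of_le hyx.le, orderOf_lt_of_lt hyx⟩
  have hkn' : k ∣ n' ∧ k < n' := ⟨orderOf_dvd_of_le hrev.le, orderOf_lt_of_lt hrev⟩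
  have hn2 : 2 < n := by omega
  have hn'2 : 2 < n' := by omega
  have hXpure : ∀ z, simEq G z x → orderOf z = n := by
    rcases hat_dichotomy hx1 with h | h
    · exact h
    · exact absurd (eq_one_of_lt_prime (h x (simEq_refl x)) hyx) hy1
  have hY'pure : ∀ z, simEq G z y' → orderOf z = n' := by
    rcases hat_dichotomy hy'1 with h | h
    · exact h
    · exact absurd (eq_one_of_lt_prime (h y' (simEq_refl y')) hrev) hx'1
  -- class cardinalities
  have hBgen : hatCls G y = genCls G y := hat_eq_genCls_of_below hBpure hyx
  have hWgen : hatCls G x' = genCls G x' := hat_eq_genCls_of_below hWpure hrev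
  have hcardB : (hatCls G y).ncard = Nat.totient m := by rw [hBgen, ncard_genCls]
  have hcardW : (hatCls G x').ncard = Nat.totient k := by rw [hWgen, ncard_genCls]
  obtain ⟨sA, hsA1, hcardA⟩ := hat_pure_card hXpure
  have himgX : (hatCls G x').ncard = (hatCls G x).ncard := ncard_hat_image hπ x
  have himgY : (hatCls G y').ncard = (hatCls G y).ncard := ncard_hat_image hπ y
  have hgenY' : Nat.totient n' ≤ (hatCls G y').ncard := by
    rw [← ncard_genCls y']
    exact Set.ncard_le_ncard (genCls_subset_hatCls y') (Set.toFinite _)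
  -- the chain of inequalities
  have hc1 : Nat.totient n ≤ Nat.totient k := by
    have hprod : Nat.totient n * sA = Nat.totient k := by
      rw [← hcardA, ← himgX]; exact hcardW
    have hle : Nat.totient n ≤ Nat.totient n * sA := Nat.le_mul_of_pos_right _ (by omega)
    omega
  have hc2 : Nat.totient k ≤ Nat.totient n' := totient_le_of_dvd hkn'.1 (by omega)
  have hc3 : Nat.totient n' ≤ Nat.totient m := by
    calc Nat.totient n' ≤ (hatCls G y').ncard := hgenY'
    _ = (hatCls G y).ncard := himgY
    _ = Nat.totient m := hcardB
  have hc4 : Nat.totient m ≤ Nat.totient n := totient_le_of_dvd hmn.1 (by omega)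
  have heq_mn : Nat.totient n = Nat.totient m := by omega
  have heq_kn' : Nat.totient n' = Nat.totient k := by omega
  obtain ⟨h2m, hmodd⟩ := totient_eq_of_dvd_lt (by omega) hmn.1 hmn.2 heq_mn
  obtain ⟨h2k, hkodd⟩ := totient_eq_of_dvd_lt (by omega) hkn'.1 hkn'.2 heq_kn'
  -- m and k are odd, n = 2m, n' = 2k
  have noT : ∀ z : G, Dom z → z = 1 := dom_eq_one_of_odd hyD hmodd
  -- the involution τ = x ^ m
  set τ := x ^ m with hτd
  have hoτ : orderOf τ = 2 := by
    rw [hτd]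
    exact orderOf_pow_half h2m (by omega)
  have hτ1 : τ ≠ 1 := by
    intro hh
    rw [hh, orderOf_one] at hoτ
    omega
  have hττ : zpowers τ < zpowers x := by
    rw [hτd]
    apply zpowers_pow_lt
    rw [← hτd, hoτ]
    omega
  set υ := π τ with hυd
  have hυ1 : υ ≠ 1 := by
    intro hh
    apply hτ1
    have h1 : π 1 = 1 := noT (π 1) (dom_of_dom hπ dom_one)
    have h2 : π τ = 1 := by rw [← hυd, hh]
    exact π.injective (by rw [h2, h1])
  have hadjυ : rpAdj G x' υ := by
    have h0 : rpAdj G x τ := Or.inr hττ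
    exact (hπ x τ).2 h0
  -- the class of τ is a prime class below x, odd cardinality
  have hτprime : ∀ z, simEq G z τ → (orderOf z).Prime := by
    rcases hat_dichotomy hτ1 with h | h
    · intro z hz
      rw [h z hz, hoτ]
      exact Nat.prime_two
    · exact h
  obtain ⟨QT, hQT, h2QT, hQTcard⟩ := hat_prime_card hτ1 hτprime hττ
  have hτodd : Odd (hatCls G τ).ncard := by
    rw [hQTcard]
    exact odd_sum_of_two_mem (fun q hq => (hQT q hq).1) (by rwa [hoτ] at h2QT)
  -- the class of υ has even cardinality
  have hυeven : Even (hatCls G υ).ncard := by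
    rcases hadjυ with hlt | hlt
    · -- x' < υ : the class of υ is pure of order > k
      have hUpure : ∀ z, simEq G z υ → orderOf z = orderOf υ := by
        rcases hat_dichotomy hυ1 with h | h
        · exact h
        · exact absurd (eq_one_of_lt_prime (h υ (simEq_refl υ)) hlt) hx'1
      obtain ⟨s, hs1, hs⟩ := hat_pure_card hUpure
      rw [hs]
      have hok : 2 < orderOf υ := by
        have := orderOf_lt_of_lt hlt
        omega
      exact (Nat.totient_even hok).mul_right s
    · -- υ < x'
      rcases hat_dichotomy hυ1 with hUpure | hUprime
      · -- pure of odd order μ ≥ 3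
        obtain ⟨s, hs1, hs⟩ := hat_pure_card hUpure
        rw [hs]
        have hdvd : orderOf υ ∣ k := orderOf_dvd_of_le hlt.le
        have hoυ2 : 2 ≤ orderOf υ := by
          have h1 := orderOf_pos υ
          have h2 : orderOf υ ≠ 1 := fun hh => hυ1 (orderOf_eq_one_iff.1 hh)
          omega
        have hυodd : Odd (orderOf υ) := hkodd.of_dvd_nat hdvd
        have hok : 2 < orderOf υ := by
          rcases hυodd with ⟨c, hc⟩
          omega
        exact (Nat.totient_even hok).mul_right s
      · -- prime class below x' : all primes divide k which is odd
        obtain ⟨QU, hQU, hυQU, hQUcard⟩ := hat_prime_card hυ1 hUprime hlt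
        rw [hQUcard]
        apply even_sum_of_two_not_mem (fun q hq => (hQU q hq).1)
        intro h2m'
        have h2k : (2:ℕ) ∣ k := (hQU 2 h2m').2
        rcases hkodd with ⟨c, hc⟩
        omega
  have hcards : (hatCls G υ).ncard = (hatCls G τ).ncard := by
    rw [hυd]
    exact ncard_hat_image hπ τ
  rw [hcards] at hυeven
  exact (Nat.not_odd_iff_even.2 hυeven) hτodd


lemma main_forward {π : Equiv.Perm G} (hπ : π ∈ RPAut G) {x y : G} (hx : x ≠ 1) (hy : y ≠ 1)
    (hyx : zpowers y < zpowers x) : zpowers (π y) < zpowers (π x) := by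
  have hxD : ¬ Dom x := by
    intro hD
    obtain ⟨ho2, -⟩ := dom_structure hD hx
    exact hy (eq_one_of_lt_prime (by rw [ho2]; exact Nat.prime_two) hyx)
  have hadj : rpAdj G (π x) (π y) := (hπ x y).2 (Or.inr hyx)
  rcases hadj with hbad | hgood
  swap
  · exact hgood
  exfalso
  by_cases hyD : Dom y
  · by_cases hy'1 : π y = 1
    · rw [hy'1, zpowers_one_eq_bot] at hbad
      exact not_lt_bot hbad
    · have hDy' : Dom (π y) := dom_of_dom hπ hyD
      obtain ⟨ho2, -⟩ := dom_structure hDy' hy'1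
      have hπx1 : π x = 1 := eq_one_of_lt_prime (by rw [ho2]; exact Nat.prime_two) hbad
      apply hxD
      have hD1 : Dom (π⁻¹ (1:G)) := dom_of_dom ((RPAut G).inv_mem hπ) dom_one
      rwa [← hπx1, Equiv.Perm.coe_inv, Equiv.symm_apply_apply] at hD1
  · have hx'D : ¬ Dom (π x) := by
      intro hD
      apply hxD
      have := dom_of_dom ((RPAut G).inv_mem hπ) hD
      rwa [Equiv.Perm.coe_inv, Equiv.symm_apply_apply] at this
    have hy'D : ¬ Dom (π y) := by
      intro hD
      apply hyD
      have := dom_of_dom ((RPAut G).inv_mem hπ) hD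
      rwa [Equiv.Perm.coe_inv, Equiv.symm_apply_apply] at this
    exact no_reversal hπ hxD hyD hx'D hy'D hyx hbad

end Fin
end RPWork

/-- automorphisms of the undirected reduced power graph preserve strict
inclusion of generated cyclic subgroups on non-identity elements:
`⟨y⟩ ⊊ ⟨x⟩ ↔ ⟨y^π⟩ ⊊ ⟨x^π⟩`. -/

theorem aut_RP_preserves_ssubset {G : Type*} [Group G] [Fintype G]
    (π : Equiv.Perm G) (hπ : π ∈ RPAut G) (x y : G) (hx : x ≠ 1) (hy : y ≠ 1) :
    zpowers y < zpowers x ↔ zpowers (π y) < zpowers (π x) := by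
  constructor
  · exact fun h => RPWork.main_forward hπ hx hy h
  · intro h
    by_cases hy' : π y = 1
    · -- `y` is a non-trivial dominating element
      have hDy : RPWork.Dom y := by
        have h1 := RPWork.dom_of_dom ((RPAut G).inv_mem hπ) RPWork.dom_one
        have h2 : π⁻¹ (1:G) = y := by rw [← hy', Equiv.Perm.coe_inv, Equiv.symm_apply_apply]
        rwa [h2] at h1
      obtain ⟨-, hlt⟩ := RPWork.dom_structure hDy hy
      refine hlt x hx ?_
      rintro rfl
      exact lt_irrefl _ h
    · by_cases hx' : π x = 1
      · rw [hx', Subgroup.zpowers_one_eq_bot] at h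
        exact absurd h (not_lt_bot)
      · have := RPWork.main_forward ((RPAut G).inv_mem hπ) hx' hy' h
        simpa using this
end

section
/- Let G be a finite group, x ∈ G, and π an automorphism of the directed reduced power graph →RP(G). If the ≃-class x̂ is of Type III, then the ≃-class of x^π equals x̂ (i.e., π fixes this ≃-class setwise). -/
open Subgroup Set

variable (G : Type*) [Group G]

lemma drp_fix_one {G : Type*} [Group G] (π : Equiv.Perm G) (hπ : π ∈ DRPAut G) :
    π 1 = 1 := by
  have h := (hπ 1 (π.symm 1)).mpr
  rw [Equiv.apply_symm_apply] at h
  by_contra hne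
  have harc : rpArc G (π 1) 1 := by
    simp only [rpArc, zpowers_one_eq_bot]
    exact bot_lt_iff_ne_bot.mpr (fun hb => hne (zpowers_eq_bot.mp hb))
  have : rpArc G 1 (π.symm 1) := by
    have h2 := (hπ 1 (π.symm 1)).mp (by rwa [Equiv.apply_symm_apply])
    exact h2
  simp only [rpArc, zpowers_one_eq_bot] at this
  exact absurd this (by simp)

lemma typeIII_adj_iff {G : Type*} [Group G] [Fintype G] (x z : G) (hT : TypeIII G x) :
    rpAdj G x z ↔ z = 1 := by
  obtain ⟨hnc, _, hall⟩ := hT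
  obtain ⟨hmax, hp⟩ := hall x (fun _ => Iff.rfl)
  constructor
  · rintro (h | h)
    · exact absurd (hmax z h.le) h.ne
    · -- zpowers z < zpowers x, orderOf x prime
      have hle : zpowers z ≤ zpowers x := h.le
      have hdvd : orderOf z ∣ orderOf x := by
        exact orderOf_dvd_of_mem_zpowers (hle (mem_zpowers z))
      rcases (Nat.Prime.eq_one_or_self_of_dvd hp _ hdvd) with h1 | h1
      · exact orderOf_eq_one_iff.mp h1
      · exfalso
        have hcard : Nat.card (zpowers z) = Nat.card (zpowers x) := by
          rw [Nat.card_zpowers, Nat.card_zpowers, h1]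
        have : (zpowers z : Set G).ncard = (zpowers x : Set G).ncard := by
          rw [← Nat.card_coe_set_eq, ← Nat.card_coe_set_eq]; exact hcard
        exact h.ne (SetLike.ext' (Set.eq_of_subset_of_ncard_le hle this.ge (Set.toFinite _)))
  · rintro rfl
    right
    rw [zpowers_one_eq_bot]
    exact bot_lt_iff_ne_bot.mpr (fun hb => hp.ne_one (by
      rw [zpowers_eq_bot] at hb; simp [hb]))

/-- if `x̂` is of Type III and `π` is an automorphism of `→RP(G)`, then the
`≃`-class of `x^π` equals `x̂`. -/
theorem aut_DRP_typeIII_fixed {G : Type*} [Group G] [Fintype G]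
    (π : Equiv.Perm G) (hπ : π ∈ DRPAut G) (x : G) (hT : TypeIII G x) :
    hatCls G (π x) = hatCls G x := by
  have h1 : π 1 = 1 := drp_fix_one π hπ
  have hadj : ∀ a b : G, rpAdj G (π a) (π b) ↔ rpAdj G a b := by
    intro a b
    unfold rpAdj
    rw [or_comm, or_comm (a := zpowers a < zpowers b)]
    exact or_congr (hπ a b) (hπ b a)
  have hsim : simEq G (π x) x := by
    intro z
    have : rpAdj G (π x) z ↔ rpAdj G x (π.symm z) := by
      conv_lhs => rw [show z = π (π.symm z) from (Equiv.apply_symm_apply π z).symm]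
      exact hadj x (π.symm z)
    rw [this, typeIII_adj_iff x _ hT, typeIII_adj_iff x z hT]
    constructor
    · intro h
      have := congrArg π h
      rwa [Equiv.apply_symm_apply, h1] at this
    · rintro rfl
      rw [show (1:G) = π 1 from h1.symm, Equiv.symm_apply_apply, h1]
  ext y
  simp only [hatCls, Set.mem_setOf_eq]
  constructor
  · intro h z; rw [h z, hsim z]
  · intro h z; rw [h z, ← hsim z]
end

section
/- Let G be a finite group, x ∈ G, and π an automorphism of the directed reduced power graph →RP(G). If the ≃-class x̂ is of Type I (i.e., x̂ = [x]), then the ≃-class of x^π is also of Type I and o(x^π) = o(x). -/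
open Subgroup Set

variable (G : Type*) [Group G]

namespace RPAux

variable {G : Type*} [Group G]

def Od (x : G) : Set G := {a | zpowers a < zpowers x}
def Ud (x : G) : Set G := {a | zpowers x < zpowers a}

lemma mem_zpowers_iff_le {a b : G} : a ∈ zpowers b ↔ zpowers a ≤ zpowers b :=
  ⟨fun h => zpowers_le.2 h, fun h => h (mem_zpowers a)⟩

lemma mem_Od {a x : G} : a ∈ Od x ↔ zpowers a < zpowers x := Iff.rfl
lemma mem_Ud {a x : G} : a ∈ Ud x ↔ zpowers x < zpowers a := Iff.rfl

lemma Od_congr {a b : G} (h : zpowers a = zpowers b) : Od a = Od b := by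
  unfold Od; rw [h]

lemma Ud_congr {a b : G} (h : zpowers a = zpowers b) : Ud a = Ud b := by
  unfold Ud; rw [h]

lemma Od_one : Od (1 : G) = ∅ := by
  ext a; simp [Od, zpowers_one_eq_bot]

lemma one_mem_Od {x : G} (h : x ≠ 1) : (1 : G) ∈ Od x := by
  rw [mem_Od, zpowers_one_eq_bot, bot_lt_iff_ne_bot, Ne, zpowers_eq_bot]
  exact h

lemma ne_one_of_Od {x c : G} (h : c ∈ Od x) : x ≠ 1 := by
  rintro rfl
  rw [Od_one] at h
  exact h

variable [Fintype G]

set_option linter.unusedSectionVars false in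
lemma ncard_zpowers (a : G) : (zpowers a : Set G).ncard = orderOf a := by
  rw [← Nat.card_coe_set_eq]
  exact Nat.card_zpowers a

lemma orderOf_lt_of_lt {a b : G} (h : zpowers a < zpowers b) : orderOf a < orderOf b := by
  rw [← ncard_zpowers, ← ncard_zpowers]
  exact Set.ncard_lt_ncard (SetLike.coe_ssubset_coe.2 h) (Set.toFinite _)

omit [Fintype G] in
lemma orderOf_eq_of_zpowers_eq {a b : G} (h : zpowers a = zpowers b) :
    orderOf a = orderOf b := by
  rw [← Nat.card_zpowers, ← Nat.card_zpowers, h]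

lemma zpowers_eq_of_le_of_orderOf_le {a b : G} (h : zpowers a ≤ zpowers b)
    (hc : orderOf b ≤ orderOf a) : zpowers a = zpowers b := by
  apply SetLike.coe_injective
  refine Set.eq_of_subset_of_ncard_le (SetLike.coe_subset_coe.2 h) ?_ (Set.toFinite _)
  rw [ncard_zpowers, ncard_zpowers]; exact hc

lemma zpowers_le_of_orderOf_dvd {u a b : G} (ha : a ∈ zpowers u) (hb : b ∈ zpowers u)
    (h : orderOf a ∣ orderOf b) : zpowers a ≤ zpowers b := by
  obtain ⟨i, hi0⟩ := mem_powers_iff_mem_zpowers.mpr ha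
  obtain ⟨j, hj0⟩ := mem_powers_iff_mem_zpowers.mpr hb
  have hi : u ^ i = a := hi0
  have hj : u ^ j = b := hj0
  have hn0 : 0 < orderOf u := orderOf_pos u
  have hg'n : Nat.gcd (orderOf u) i ∣ orderOf u := Nat.gcd_dvd_left _ _
  have hgn : Nat.gcd (orderOf u) j ∣ orderOf u := Nat.gcd_dvd_left _ _
  set n := orderOf u
  set g' : ℕ := Nat.gcd n i
  set g : ℕ := Nat.gcd n j
  have hoa : orderOf a = n / g' := by rw [← hi, orderOf_pow]
  have hob : orderOf b = n / g := by rw [← hj, orderOf_pow]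
  have hg'pos : 0 < n / g' := Nat.div_pos (Nat.le_of_dvd hn0 hg'n) (Nat.pos_of_dvd_of_pos hg'n hn0)
  have hdvd : (n / g') ∣ (n / g) := by rw [← hoa, ← hob]; exact h
  obtain ⟨c, hc⟩ := hdvd
  have hgg' : g ∣ g' := by
    refine ⟨c, ?_⟩
    have h1 : g' * (n / g') = n := Nat.mul_div_cancel' hg'n
    have h2 : g * (n / g) = n := Nat.mul_div_cancel' hgn
    rw [hc] at h2
    have h3 : g' * (n / g') = (g * c) * (n / g') := by
      rw [h1]
      conv_lhs => rw [← h2]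
      ring
    exact Nat.eq_of_mul_eq_mul_right hg'pos h3
  have h1 : a ∈ zpowers (u ^ g') := by
    refine mem_powers_iff_mem_zpowers.mp ⟨i / g', ?_⟩
    show (u ^ g') ^ (i / g') = a
    rw [← pow_mul, Nat.mul_div_cancel' (Nat.gcd_dvd_right n i), hi]
  have h2 : u ^ g' ∈ zpowers (u ^ g) := by
    refine mem_powers_iff_mem_zpowers.mp ⟨g' / g, ?_⟩
    show (u ^ g) ^ (g' / g) = u ^ g'
    rw [← pow_mul, Nat.mul_div_cancel' hgg']
  have h3 : u ^ g ∈ zpowers b := by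
    have hbz : (u : G) ^ (j : ℤ) = b := by rw [zpow_natCast, hj]
    have hu1 : (u : G) ^ (n : ℤ) = 1 := by
      rw [zpow_natCast]; exact pow_orderOf_eq_one u
    have key : (u : G) ^ ((g : ℕ) : ℤ) = b ^ (Nat.gcdB n j) := by
      rw [show ((g : ℕ) : ℤ) = (n : ℤ) * Nat.gcdA n j + (j : ℤ) * Nat.gcdB n j from
        Nat.gcd_eq_gcd_ab n j]
      rw [zpow_add, zpow_mul, zpow_mul, hu1, hbz, one_zpow, one_mul]
    have : (u : G) ^ ((g : ℕ) : ℤ) ∈ zpowers b := by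
      rw [key]; exact zpow_mem (mem_zpowers b) _
    rwa [zpow_natCast] at this
  calc zpowers a ≤ zpowers (u ^ g') := mem_zpowers_iff_le.1 h1
    _ ≤ zpowers (u ^ g) := mem_zpowers_iff_le.1 h2
    _ ≤ zpowers b := mem_zpowers_iff_le.1 h3

lemma zpowers_eq_of_orderOf_eq {u a b : G} (ha : a ∈ zpowers u) (hb : b ∈ zpowers u)
    (h : orderOf a = orderOf b) : zpowers a = zpowers b :=
  le_antisymm (zpowers_le_of_orderOf_dvd ha hb h.dvd)
    (zpowers_le_of_orderOf_dvd hb ha h.symm.dvd)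

omit [Fintype G] in
lemma mem_of_coprime_pows {H : Subgroup G} {s : G} {p q : ℕ} (hpq : Nat.Coprime p q)
    (hp : s ^ p ∈ H) (hq : s ^ q ∈ H) : s ∈ H := by
  have hb : ((1 : ℕ) : ℤ) = (p : ℤ) * Nat.gcdA p q + (q : ℤ) * Nat.gcdB p q := by
    rw [← hpq]; exact Nat.gcd_eq_gcd_ab p q
  have key : ((s ^ (p : ℤ)) ^ (Nat.gcdA p q)) * ((s ^ (q : ℤ)) ^ (Nat.gcdB p q)) = s := by
    rw [← zpow_mul, ← zpow_mul, ← zpow_add, ← hb]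
    norm_num
  rw [← key]
  refine mul_mem (H.zpow_mem ?_ _) (H.zpow_mem ?_ _)
  · rw [zpow_natCast]; exact hp
  · rw [zpow_natCast]; exact hq

lemma zpowers_pow_lt {s : G} {p : ℕ} (hp : p.Prime) (hdvd : p ∣ orderOf s) :
    zpowers (s ^ p) < zpowers s := by
  have hle : zpowers (s ^ p) ≤ zpowers s :=
    mem_zpowers_iff_le.1 (mem_powers_iff_mem_zpowers.mp ⟨p, rfl⟩)
  have ho : orderOf (s ^ p) = orderOf s / p := orderOf_pow_of_dvd hp.ne_zero hdvd
  refine lt_of_le_of_ne hle (fun heq => ?_)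
  have h2 := orderOf_eq_of_zpowers_eq heq
  rw [ho] at h2
  have hlt : orderOf s / p < orderOf s := Nat.div_lt_self (orderOf_pos s) hp.one_lt
  omega

end RPAux

section Part2

open Subgroup Set

variable {G : Type*} [Group G]

lemma rpAdj_iff {x z : G} : rpAdj G x z ↔ z ∈ RPAux.Ud x ∨ z ∈ RPAux.Od x := Iff.rfl

lemma simEq_refl (x : G) : simEq G x x := fun _ => Iff.rfl
lemma simEq_symm {x y : G} (h : simEq G x y) : simEq G y x := fun z => (h z).symm
lemma simEq_trans {x y w : G} (h : simEq G x y) (h' : simEq G y w) : simEq G x w :=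
  fun z => (h z).trans (h' z)

lemma simEq_of_zpowers_eq {x y : G} (h : zpowers x = zpowers y) : simEq G x y := by
  intro z; unfold rpAdj; rw [h]

lemma hatCls_eq_of_simEq {x y : G} (h : simEq G x y) : hatCls G x = hatCls G y := by
  ext a; exact ⟨fun ha => simEq_trans ha h, fun ha => simEq_trans ha (simEq_symm h)⟩

lemma genCls_subset_hatCls (x : G) : genCls G x ⊆ hatCls G x := fun _ ha =>
  simEq_of_zpowers_eq ha

lemma mem_genCls {a x : G} : a ∈ genCls G x ↔ zpowers a = zpowers x := Iff.rfl

lemma simEq_Od_subset {x y : G} (h : simEq G x y) : RPAux.Od x ⊆ RPAux.Od y := by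
  intro a ha
  have hadj : rpAdj G y a := (h a).1 (Or.inr ha)
  rcases hadj with hu | ho
  · exfalso
    have hyx : zpowers y < zpowers x := lt_trans hu ha
    have hself : rpAdj G y y := (h y).1 (Or.inr hyx)
    rcases hself with h1 | h1 <;> exact lt_irrefl _ h1
  · exact ho

lemma simEq_Od_eq {x y : G} (h : simEq G x y) : RPAux.Od x = RPAux.Od y :=
  subset_antisymm (simEq_Od_subset h) (simEq_Od_subset (simEq_symm h))

lemma simEq_Ud_subset {x y : G} (h : simEq G x y) : RPAux.Ud x ⊆ RPAux.Ud y := by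
  intro a ha
  have hadj : rpAdj G y a := (h a).1 (Or.inl ha)
  rcases hadj with hu | ho
  · exact hu
  · exfalso
    have hyx : zpowers x < zpowers y := lt_trans ha ho
    have hself : rpAdj G x x := ((h x).2 (Or.inr hyx))
    rcases hself with h1 | h1 <;> exact lt_irrefl _ h1

lemma simEq_Ud_eq {x y : G} (h : simEq G x y) : RPAux.Ud x = RPAux.Ud y :=
  subset_antisymm (simEq_Ud_subset h) (simEq_Ud_subset (simEq_symm h))

lemma simEq_of_OU {x y : G} (hO : RPAux.Od x = RPAux.Od y) (hU : RPAux.Ud x = RPAux.Ud y) :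
    simEq G x y := by
  intro z
  rw [rpAdj_iff, rpAdj_iff, hO, hU]

section Perm

variable (π : Equiv.Perm G)
  (hlt : ∀ a b : G, zpowers (π a) < zpowers (π b) ↔ zpowers a < zpowers b)

include hlt

lemma img_Od (a : G) : π '' RPAux.Od a = RPAux.Od (π a) := by
  ext b
  constructor
  · rintro ⟨c, hc, rfl⟩; exact (hlt c a).2 hc
  · intro hb
    refine ⟨π.symm b, ?_, π.apply_symm_apply b⟩
    have h2 : zpowers (π (π.symm b)) < zpowers (π a) := by rwa [π.apply_symm_apply]
    exact (hlt _ _).1 h2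

lemma img_Ud (a : G) : π '' RPAux.Ud a = RPAux.Ud (π a) := by
  ext b
  constructor
  · rintro ⟨c, hc, rfl⟩; exact (hlt a c).2 hc
  · intro hb
    refine ⟨π.symm b, ?_, π.apply_symm_apply b⟩
    have h2 : zpowers (π a) < zpowers (π (π.symm b)) := by rwa [π.apply_symm_apply]
    exact (hlt _ _).1 h2

lemma perm_one : π 1 = 1 := by
  by_contra h
  have h1 : (1 : G) ∈ RPAux.Od (π 1) := RPAux.one_mem_Od h
  rw [← img_Od π hlt 1, RPAux.Od_one, Set.image_empty] at h1
  exact h1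

lemma simEq_iff_nbhd {x y : G} :
    simEq G x y ↔ (RPAux.Ud x ∪ RPAux.Od x) = (RPAux.Ud y ∪ RPAux.Od y) := by
  rw [Set.ext_iff]
  exact forall_congr' fun z => Iff.rfl

omit hlt in
lemma simEq_iff_nbhd' {x y : G} :
    simEq G x y ↔ (RPAux.Ud x ∪ RPAux.Od x) = (RPAux.Ud y ∪ RPAux.Od y) := by
  rw [Set.ext_iff]
  exact forall_congr' fun z => Iff.rfl

lemma perm_simEq {a b : G} : simEq G (π a) (π b) ↔ simEq G a b := by
  rw [simEq_iff_nbhd', simEq_iff_nbhd' (x := a)]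
  rw [← img_Ud π hlt, ← img_Od π hlt, ← img_Ud π hlt, ← img_Od π hlt,
    ← Set.image_union, ← Set.image_union]
  exact Set.image_eq_image π.injective

lemma img_hat (a : G) : π '' hatCls G a = hatCls G (π a) := by
  ext b
  constructor
  · rintro ⟨c, hc, rfl⟩
    exact (perm_simEq π hlt).2 hc
  · intro hb
    refine ⟨π.symm b, ?_, π.apply_symm_apply b⟩
    have h2 : simEq G (π (π.symm b)) (π a) := by rwa [π.apply_symm_apply]
    exact (perm_simEq π hlt).1 h2

end Perm

variable [Fintype G]

lemma zpowers_set_decomp (s : G) : (zpowers s : Set G) = RPAux.Od s ∪ genCls G s := by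
  ext a
  rw [SetLike.mem_coe, RPAux.mem_zpowers_iff_le, Set.mem_union, le_iff_lt_or_eq]
  exact Iff.rfl

lemma Od_disjoint_gen (s : G) : Disjoint (RPAux.Od s) (genCls G s) := by
  rw [Set.disjoint_left]
  intro a ha hg
  rw [RPAux.mem_Od] at ha
  rw [mem_genCls] at hg
  rw [hg] at ha
  exact lt_irrefl _ ha

lemma card_decomp (s : G) : orderOf s = (RPAux.Od s).ncard + (genCls G s).ncard := by
  rw [← RPAux.ncard_zpowers, zpowers_set_decomp,
    Set.ncard_union_eq (Od_disjoint_gen s) (Set.toFinite _) (Set.toFinite _)]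

lemma Od_of_orderOf_prime {s : G} (hp : (orderOf s).Prime) : RPAux.Od s = {1} := by
  have hs1 : s ≠ 1 := by
    intro h; rw [h, orderOf_one] at hp; exact hp.ne_one rfl
  ext c
  rw [Set.mem_singleton_iff]
  constructor
  · intro hc
    have h1 : c ∈ zpowers s := RPAux.mem_zpowers_iff_le.2 hc.le
    have h2 : orderOf c ∣ orderOf s := orderOf_dvd_of_mem_zpowers h1
    have h3 : orderOf c < orderOf s := RPAux.orderOf_lt_of_lt hc
    rcases hp.eq_one_or_self_of_dvd _ h2 with h | h
    · exact orderOf_eq_one_iff.1 h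
    · omega
  · rintro rfl
    exact RPAux.one_mem_Od hs1

lemma Od_two_primes {u w v : G} {p q : ℕ} (hp : p.Prime) (hq : q.Prime)
    (hu : orderOf u = p * q) (hw : w ∈ zpowers u) (hv : v ∈ zpowers u)
    (how : orderOf w = p) (hov : orderOf v = q) :
    RPAux.Od u = {1} ∪ genCls G w ∪ genCls G v := by
  have hu1 : u ≠ 1 := by
    intro h
    rw [h, orderOf_one] at hu
    have h2 := hp.two_le; have h3 := hq.two_le
    nlinarith
  have hplt : p < p * q := by
    have := hq.two_le; have := hp.pos; nlinarith
  have hqlt : q < p * q := by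
    have := hp.two_le; have := hq.pos; nlinarith
  ext c
  simp only [Set.mem_union, Set.mem_singleton_iff]
  constructor
  · intro hc
    have hcm : c ∈ zpowers u := RPAux.mem_zpowers_iff_le.2 hc.le
    have hdvd : orderOf c ∣ p * q := by
      rw [← hu]; exact orderOf_dvd_of_mem_zpowers hcm
    have hlt : orderOf c < p * q := by
      rw [← hu]; exact RPAux.orderOf_lt_of_lt hc
    have hcase : orderOf c = 1 ∨ orderOf c = p ∨ orderOf c = q := by
      by_cases hpd : p ∣ orderOf c
      · obtain ⟨d, hd⟩ := hpd
        rw [hd] at hdvd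
        have hdq : d ∣ q := (Nat.mul_dvd_mul_iff_left hp.pos).1 hdvd
        rcases hq.eq_one_or_self_of_dvd d hdq with h | h
        · right; left; rw [hd, h, mul_one]
        · exfalso; rw [hd, h] at hlt; omega
      · have hco : Nat.Coprime (orderOf c) p :=
          ((Nat.Prime.coprime_iff_not_dvd hp).2 hpd).symm
        have hq' : orderOf c ∣ q := hco.dvd_of_dvd_mul_left hdvd
        rcases hq.eq_one_or_self_of_dvd _ hq' with h | h
        · left; exact h
        · right; right; exact h
    rcases hcase with h | h | h
    · left; left; exact orderOf_eq_one_iff.1 h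
    · left; right; exact RPAux.zpowers_eq_of_orderOf_eq hcm hw (h.trans how.symm)
    · right; exact RPAux.zpowers_eq_of_orderOf_eq hcm hv (h.trans hov.symm)
  · intro hc
    rcases hc with (rfl | hcw) | hcv
    · exact RPAux.one_mem_Od hu1
    · rw [RPAux.mem_Od]
      refine lt_of_le_of_ne (hcw ▸ RPAux.mem_zpowers_iff_le.1 hw) (fun heq => ?_)
      have h2 := RPAux.orderOf_eq_of_zpowers_eq heq
      have h3 := RPAux.orderOf_eq_of_zpowers_eq hcw
      rw [h3, how, hu] at h2
      omega
    · rw [RPAux.mem_Od]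
      refine lt_of_le_of_ne (hcv ▸ RPAux.mem_zpowers_iff_le.1 hv) (fun heq => ?_)
      have h2 := RPAux.orderOf_eq_of_zpowers_eq heq
      have h3 := RPAux.orderOf_eq_of_zpowers_eq hcv
      rw [h3, hov, hu] at h2
      omega

lemma ncard_tri {w v : G} (hw1 : w ≠ 1) (hv1 : v ≠ 1) (hne : zpowers w ≠ zpowers v) :
    (({1} ∪ genCls G w ∪ genCls G v : Set G)).ncard
      = 1 + (genCls G w).ncard + (genCls G v).ncard := by
  have hd1 : Disjoint ({1} : Set G) (genCls G w) := by
    rw [Set.disjoint_left]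
    rintro a rfl hg
    rw [mem_genCls, zpowers_one_eq_bot] at hg
    exact hw1 (zpowers_eq_bot.1 hg.symm)
  have hd2 : Disjoint (({1} : Set G) ∪ genCls G w) (genCls G v) := by
    rw [Set.disjoint_union_left]
    constructor
    · rw [Set.disjoint_left]
      rintro a rfl hg
      rw [mem_genCls, zpowers_one_eq_bot] at hg
      exact hv1 (zpowers_eq_bot.1 hg.symm)
    · rw [Set.disjoint_left]
      intro a ha hg
      rw [mem_genCls] at ha hg
      exact hne (ha.symm.trans hg)
  rw [Set.ncard_union_eq hd2 (Set.toFinite _) (Set.toFinite _),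
    Set.ncard_union_eq hd1 (Set.toFinite _) (Set.toFinite _), Set.ncard_singleton]

/-- the key "pair" lemma: two elements with the same strict neighbourhoods generating
distinct cyclic subgroups force prime-power order and chain structure below. -/
lemma pair_struct {s t : G} (hO : RPAux.Od s = RPAux.Od t) (hU : RPAux.Ud s = RPAux.Ud t)
    (hne : zpowers s ≠ zpowers t) :
    ∃ p k, p.Prime ∧ 1 ≤ k ∧ orderOf s = p ^ k ∧ orderOf (s ^ p) = p ^ (k - 1) ∧
      RPAux.Od s = (zpowers (s ^ p) : Set G) := by
  -- s ≠ 1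
  have hs1 : s ≠ 1 := by
    rintro rfl
    have ht1 : t ≠ 1 := fun h => hne (by rw [h])
    have : (1 : G) ∈ RPAux.Od t := RPAux.one_mem_Od ht1
    rw [← hO, RPAux.Od_one] at this
    exact this
  -- incomparability
  have hnle : ¬ zpowers s ≤ zpowers t := by
    intro hle
    have hlt2 : zpowers s < zpowers t := lt_of_le_of_ne hle hne
    have hmem : s ∈ RPAux.Od s := by rw [hO, RPAux.mem_Od]; exact hlt2
    rw [RPAux.mem_Od] at hmem
    exact lt_irrefl _ hmem
  -- Od s = carrier of the intersection subgroup
  have hinter : ∀ a : G, a ∈ RPAux.Od s ↔ (a ∈ zpowers s ∧ a ∈ zpowers t) := by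
    intro a
    constructor
    · intro ha
      refine ⟨RPAux.mem_zpowers_iff_le.2 ha.le, ?_⟩
      have : a ∈ RPAux.Od t := by rw [← hO]; exact ha
      exact RPAux.mem_zpowers_iff_le.2 this.le
    · rintro ⟨h1, h2⟩
      rw [RPAux.mem_Od]
      refine lt_of_le_of_ne (RPAux.mem_zpowers_iff_le.1 h1) (fun heq => ?_)
      exact hnle (heq ▸ RPAux.mem_zpowers_iff_le.1 h2)
  have hsub : RPAux.Od s = ((zpowers s ⊓ zpowers t : Subgroup G) : Set G) := by
    ext a
    rw [hinter a, SetLike.mem_coe, Subgroup.mem_inf]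
  -- all primes dividing orderOf s coincide
  have huniq : ∀ p₁ p₂ : ℕ, p₁.Prime → p₂.Prime → p₁ ∣ orderOf s → p₂ ∣ orderOf s →
      p₁ = p₂ := by
    intro p₁ p₂ hp1 hp2 hd1 hd2
    by_contra hne12
    have hm1 : s ^ p₁ ∈ zpowers s ⊓ zpowers t := by
      rw [← SetLike.mem_coe, ← hsub]
      exact RPAux.zpowers_pow_lt hp1 hd1
    have hm2 : s ^ p₂ ∈ zpowers s ⊓ zpowers t := by
      rw [← SetLike.mem_coe, ← hsub]
      exact RPAux.zpowers_pow_lt hp2 hd2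
    have hsmem : s ∈ zpowers s ⊓ zpowers t :=
      RPAux.mem_of_coprime_pows ((Nat.coprime_primes hp1 hp2).2 hne12) hm1 hm2
    have hmem : s ∈ RPAux.Od s := by rw [hsub, SetLike.mem_coe]; exact hsmem
    rw [RPAux.mem_Od] at hmem
    exact lt_irrefl _ hmem
  -- orderOf s = p ^ k
  have hno : orderOf s ≠ 1 := fun h => hs1 (orderOf_eq_one_iff.1 h)
  obtain ⟨p, hp, hpd⟩ := Nat.exists_prime_and_dvd hno
  have hform : orderOf s = p ^ (orderOf s).primeFactorsList.length :=
    Nat.eq_prime_pow_of_unique_prime_dvd (orderOf_pos s).ne'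
      (fun hd hdd => huniq _ _ hd hp hdd hpd)
  set k := (orderOf s).primeFactorsList.length with hk
  have hk1 : 1 ≤ k := by
    by_contra h
    have hk0 : k = 0 := by omega
    rw [hk0, pow_zero] at hform
    exact hno hform
  have hop : orderOf (s ^ p) = p ^ (k - 1) := by
    rw [orderOf_pow_of_dvd hp.ne_zero hpd, hform]
    rw [show k = (k - 1) + 1 from (Nat.succ_pred_eq_of_pos hk1).symm, pow_succ]
    exact Nat.mul_div_cancel _ hp.pos
  refine ⟨p, k, hp, hk1, hform, hop, ?_⟩
  ext a
  rw [SetLike.mem_coe]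
  constructor
  · intro ha
    have h1 : a ∈ zpowers s := RPAux.mem_zpowers_iff_le.2 ha.le
    have h2 : orderOf a ∣ p ^ k := by rw [← hform]; exact orderOf_dvd_of_mem_zpowers h1
    obtain ⟨m, hm, hmeq⟩ := (Nat.dvd_prime_pow hp).1 h2
    have hmk : m ≠ k := by
      intro h
      rw [h, ← hform] at hmeq
      have := RPAux.orderOf_lt_of_lt ha
      omega
    have h3 : orderOf a ∣ orderOf (s ^ p) := by
      rw [hop, hmeq]
      exact Nat.pow_dvd_pow p (by omega)
    have hsp : s ^ p ∈ zpowers s := mem_powers_iff_mem_zpowers.mp ⟨p, rfl⟩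
    exact RPAux.zpowers_le_of_orderOf_dvd h1 hsp h3 (mem_zpowers a)
  · intro ha
    have : zpowers a ≤ zpowers (s ^ p) := RPAux.mem_zpowers_iff_le.1 ha
    exact lt_of_le_of_lt this (RPAux.zpowers_pow_lt hp hpd)

end Part2

set_option maxHeartbeats 1600000 in
open Subgroup Set in
/-- if `x̂` is of Type I and `π` is an automorphism of `→RP(G)`, then the
`≃`-class of `x^π` is also of Type I and `o(x^π) = o(x)`. -/
theorem aut_DRP_typeI {G : Type*} [Group G] [Fintype G]
    (π : Equiv.Perm G) (hπ : π ∈ DRPAut G) (x : G) (hT : TypeI G x) :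
    TypeI G (π x) ∧ orderOf (π x) = orderOf x := by
  classical
  have harc : ∀ a b : G, rpArc G (π a) (π b) ↔ rpArc G a b := by
    have h := hπ
    simp only [DRPAut, Subgroup.mem_mk, Submonoid.mem_mk, Subsemigroup.mem_mk,
      Set.mem_setOf_eq] at h
    exact h
  have hlt : ∀ a b : G, zpowers (π a) < zpowers (π b) ↔ zpowers a < zpowers b :=
    fun a b => harc b a
  have hhx : hatCls G x = genCls G x := hT
  -- KEY CLAIM: the class of `π x` consists of a single ∼-class.
  have key : ∀ w v : G, simEq G w (π x) → simEq G v (π x) → zpowers w = zpowers v := by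
    intro w v hw hv
    by_contra hne
    have hOwv : RPAux.Od w = RPAux.Od v := simEq_Od_eq (simEq_trans hw (simEq_symm hv))
    have hUwv : RPAux.Ud w = RPAux.Ud v := simEq_Ud_eq (simEq_trans hw (simEq_symm hv))
    obtain ⟨p, k, hp, hk1, how, hogw, hDw⟩ := pair_struct hOwv hUwv hne
    obtain ⟨q, l, hq, hl1, hov, hogv, hDv⟩ := pair_struct hOwv.symm hUwv.symm (Ne.symm hne)
    have hw1 : w ≠ 1 := by
      intro h
      rw [h, orderOf_one] at how
      have : 2 ≤ p ^ k := le_trans hp.two_le (Nat.le_self_pow (by omega) p)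
      omega
    have hv1 : v ≠ 1 := by
      intro h
      rw [h, orderOf_one] at hov
      have : 2 ≤ q ^ l := le_trans hq.two_le (Nat.le_self_pow (by omega) q)
      omega
    have hDcard : (RPAux.Od w).ncard = p ^ (k - 1) := by
      rw [hDw, RPAux.ncard_zpowers, hogw]
    have hDcard_v : (RPAux.Od w).ncard = q ^ (l - 1) := by
      rw [hOwv, hDv, RPAux.ncard_zpowers, hogv]
    -- transport facts
    have hOπx : RPAux.Od (π x) = RPAux.Od w := simEq_Od_eq (simEq_symm hw)
    have hUπx : RPAux.Ud (π x) = RPAux.Ud w := simEq_Ud_eq (simEq_symm hw)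
    have hOx : π '' RPAux.Od x = RPAux.Od w := by rw [img_Od π hlt, hOπx]
    have hUxi : π '' RPAux.Ud x = RPAux.Ud w := by rw [img_Ud π hlt, hUπx]
    have hOxcard : (RPAux.Od x).ncard = (RPAux.Od w).ncard := by
      rw [← hOx, Set.ncard_image_of_injective _ π.injective]
    have hW : hatCls G (π x) = π '' genCls G x := by rw [← hhx, img_hat π hlt]
    have hWcard : (hatCls G (π x)).ncard = (genCls G x).ncard := by
      rw [hW, Set.ncard_image_of_injective _ π.injective]
    have hgenwW : genCls G w ⊆ hatCls G (π x) := by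
      rw [← hatCls_eq_of_simEq hw]
      exact genCls_subset_hatCls w
    have hgenvW : genCls G v ⊆ hatCls G (π x) := by
      rw [← hatCls_eq_of_simEq hv]
      exact genCls_subset_hatCls v
    by_cases hD1 : (RPAux.Od w).ncard = 1
    · -- |D| = 1 : prime orders
      have h1D : (1 : G) ∈ RPAux.Od w := RPAux.one_mem_Od hw1
      have hDeq : RPAux.Od w = {1} := by
        obtain ⟨a, ha⟩ := Set.ncard_eq_one.1 hD1
        rw [ha] at h1D ⊢
        rw [Set.mem_singleton_iff] at h1D
        rw [h1D]
      have hkk : k = 1 := by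
        by_contra h
        have h2 : 2 ≤ p ^ (k - 1) := le_trans hp.two_le (Nat.le_self_pow (by omega) p)
        rw [hD1] at hDcard
        rw [← hDcard] at h2
        omega
      have hll : l = 1 := by
        by_contra h
        have h2 : 2 ≤ q ^ (l - 1) := le_trans hq.two_le (Nat.le_self_pow (by omega) q)
        rw [hD1] at hDcard_v
        rw [← hDcard_v] at h2
        omega
      have hop : orderOf w = p := by rw [how, hkk, pow_one]
      have hoq : orderOf v = q := by rw [hov, hll, pow_one]
      -- upstream: Od x = {1}
      have hOxe : RPAux.Od x = {1} := by
        have himg : π '' RPAux.Od x = {1} := by rw [hOx, hDeq]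
        have h2 : π '' {1} = ({1} : Set G) := by
          rw [Set.image_singleton, perm_one π hlt]
        rw [← h2] at himg
        exact (Set.image_eq_image π.injective).1 himg
      have hx1 : x ≠ 1 := by
        intro h
        have h1 : (1 : G) ∈ RPAux.Od x := by rw [hOxe]; rfl
        rw [h, RPAux.Od_one] at h1
        exact h1
      by_cases hUe : RPAux.Ud w = ∅
      · -- maximal case: x itself lies in the class
        have hUx : RPAux.Ud x = ∅ := by
          have h2 := hUxi
          rw [hUe] at h2
          exact Set.image_eq_empty.1 h2
        have hsimxw : simEq G x w := by
          apply simEq_of_OU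
          · rw [hOxe, hDeq]
          · rw [hUx, hUe]
        have hsimxπx : simEq G x (π x) := simEq_trans hsimxw hw
        have hhat2 : hatCls G (π x) = genCls G x := by
          rw [← hatCls_eq_of_simEq hsimxπx, hhx]
        have hwg : w ∈ genCls G x := by rw [← hhat2]; exact hw
        have hvg : v ∈ genCls G x := by rw [← hhat2]; exact hv
        exact hne ((mem_genCls.1 hwg).trans (mem_genCls.1 hvg).symm)
      · -- CASE A : non-maximal, distinct primes
        obtain ⟨u₀, hu₀⟩ := Set.nonempty_iff_ne_empty.2 hUe
        have hwu₀ : w ∈ zpowers u₀ := RPAux.mem_zpowers_iff_le.2 (le_of_lt hu₀)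
        have hvu₀ : v ∈ zpowers u₀ := by
          have h2 : u₀ ∈ RPAux.Ud v := by rw [← hUwv]; exact hu₀
          exact RPAux.mem_zpowers_iff_le.2 (le_of_lt h2)
        have hpq : p ≠ q := by
          intro h
          exact hne (RPAux.zpowers_eq_of_orderOf_eq hwu₀ hvu₀ (by rw [hop, hoq, h]))
        have hUxne : (RPAux.Ud x).Nonempty := by
          have h2 : (π '' RPAux.Ud x).Nonempty := by rw [hUxi]; exact ⟨u₀, hu₀⟩
          exact Set.image_nonempty.1 h2
        obtain ⟨u', hu'mem, hu'min⟩ :=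
          Set.exists_min_image (RPAux.Ud x) orderOf (Set.toFinite _) hUxne
        have hminimal : ∀ b ∈ RPAux.Ud x, ¬ zpowers b < zpowers u' := by
          intro b hb hblt
          have h2 := RPAux.orderOf_lt_of_lt hblt
          have h3 := hu'min b hb
          omega
        have huU : π u' ∈ RPAux.Ud w := by
          rw [← hUxi]; exact Set.mem_image_of_mem π hu'mem
        have hwu : w ∈ zpowers (π u') := RPAux.mem_zpowers_iff_le.2 (le_of_lt huU)
        have hvu : v ∈ zpowers (π u') := by
          have h2 : π u' ∈ RPAux.Ud v := by rw [← hUwv]; exact huU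
          exact RPAux.mem_zpowers_iff_le.2 (le_of_lt h2)
        have hcomm : Commute w v := by
          obtain ⟨iw, hiw0⟩ := mem_powers_iff_mem_zpowers.mpr hwu
          obtain ⟨iv, hiv0⟩ := mem_powers_iff_mem_zpowers.mpr hvu
          have hiw : (π u') ^ iw = w := hiw0
          have hiv : (π u') ^ iv = v := hiv0
          rw [← hiw, ← hiv]
          exact (Commute.refl (π u')).pow_pow iw iv
        have hot : orderOf (w * v) = p * q := by
          rw [hcomm.orderOf_mul_eq_mul_orderOf_of_coprime
            (by rw [hop, hoq]; exact (Nat.coprime_primes hp hq).2 hpq), hop, hoq]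
        have htu : w * v ∈ zpowers (π u') := mul_mem hwu hvu
        have hwt : zpowers w < zpowers (w * v) := by
          refine lt_of_le_of_ne (RPAux.zpowers_le_of_orderOf_dvd hwu htu ?_) (fun heq => ?_)
          · rw [hop, hot]; exact dvd_mul_right p q
          · have h2 := RPAux.orderOf_eq_of_zpowers_eq heq
            rw [hop, hot] at h2
            have h3 := hq.two_le
            nlinarith [hp.pos]
        have hvt : zpowers v < zpowers (w * v) := by
          refine lt_of_le_of_ne (RPAux.zpowers_le_of_orderOf_dvd hvu htu ?_) (fun heq => ?_)
          · rw [hoq, hot]; exact dvd_mul_left q p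
          · have h2 := RPAux.orderOf_eq_of_zpowers_eq heq
            rw [hoq, hot] at h2
            have h3 := hp.two_le
            nlinarith [hq.pos]
        have htu_eq : zpowers (w * v) = zpowers (π u') := by
          have hle : zpowers (w * v) ≤ zpowers (π u') := RPAux.mem_zpowers_iff_le.1 htu
          rcases lt_or_eq_of_le hle with hlt2 | heq
          · exfalso
            have htUd : w * v ∈ RPAux.Ud w := hwt
            rw [← hUxi] at htUd
            obtain ⟨t₀, ht₀mem, ht₀eq⟩ := htUd
            rw [← ht₀eq] at hlt2
            exact hminimal t₀ ht₀mem ((hlt _ _).1 hlt2)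
          · exact heq
        have hou : orderOf (π u') = p * q := by
          rw [← hot]
          exact (RPAux.orderOf_eq_of_zpowers_eq htu_eq).symm
        have hOdu : RPAux.Od (π u') = {1} ∪ genCls G w ∪ genCls G v :=
          Od_two_primes hp hq hou hwu hvu hop hoq
        have hOducard : (RPAux.Od (π u')).ncard
            = 1 + (genCls G w).ncard + (genCls G v).ncard := by
          rw [hOdu]; exact ncard_tri hw1 hv1 hne
        have hu'1 : u' ≠ 1 := by
          intro h
          rw [h] at hu'mem
          have h2 : zpowers x < zpowers (1 : G) := hu'mem
          rw [zpowers_one_eq_bot] at h2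
          exact not_lt_bot h2
        have hOdu' : RPAux.Od u' = {1} ∪ genCls G x := by
          ext c
          simp only [Set.mem_union, Set.mem_singleton_iff, mem_genCls]
          constructor
          · intro hc
            have hπc : π c ∈ RPAux.Od (π u') := (hlt c u').2 hc
            rw [hOdu] at hπc
            rcases hπc with (h1 | h2) | h3
            · left
              rw [Set.mem_singleton_iff] at h1
              exact π.injective (by rw [h1, perm_one π hlt])
            · right
              have h4 : π c ∈ π '' genCls G x := by rw [← hW]; exact hgenwW h2
              obtain ⟨d, hd, hde⟩ := h4
              rw [← π.injective hde]
              exact hd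
            · right
              have h4 : π c ∈ π '' genCls G x := by rw [← hW]; exact hgenvW h3
              obtain ⟨d, hd, hde⟩ := h4
              rw [← π.injective hde]
              exact hd
          · intro hc
            rcases hc with rfl | hc
            · exact RPAux.one_mem_Od hu'1
            · rw [RPAux.mem_Od, hc]
              exact hu'mem
        have h1notgen : (1 : G) ∉ genCls G x := by
          rw [mem_genCls, zpowers_one_eq_bot]
          intro h
          exact hx1 (zpowers_eq_bot.1 h.symm)
        have hOdu'card : (RPAux.Od u').ncard = 1 + (genCls G x).ncard := by
          rw [hOdu', Set.ncard_union_eq (Set.disjoint_left.2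
            (by rintro a rfl ha; exact h1notgen ha)) (Set.toFinite _) (Set.toFinite _),
            Set.ncard_singleton]
        have hcards : (RPAux.Od u').ncard = (RPAux.Od (π u')).ncard := by
          rw [← img_Od π hlt, Set.ncard_image_of_injective _ π.injective]
        -- numbers
        have hnx : orderOf x = 1 + (genCls G x).ncard := by
          rw [card_decomp x, hOxe, Set.ncard_singleton]
        have hpa : p = 1 + (genCls G w).ncard := by
          have h2 := card_decomp w
          rw [hop, hD1] at h2
          exact h2
        have hqb : q = 1 + (genCls G v).ncard := by
          have h2 := card_decomp v
          rw [hoq, ← hOwv, hD1] at h2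
          exact h2
        have hndvdN : orderOf x ∣ orderOf u' :=
          orderOf_dvd_of_mem_zpowers (RPAux.mem_zpowers_iff_le.2 (le_of_lt hu'mem))
        have hnltN : orderOf x < orderOf u' := RPAux.orderOf_lt_of_lt hu'mem
        have hA1 : 1 ≤ (genCls G x).ncard := by
          have h2 : (genCls G x).Nonempty := ⟨x, mem_genCls.2 rfl⟩
          have h3 := (Set.ncard_pos (Set.toFinite _)).2 h2
          omega
        have hn1' : 1 < orderOf x := by omega
        have hdivisors : ∀ d, d ∣ orderOf u' → d ≠ orderOf u' → d = 1 ∨ d = orderOf x := by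
          intro d hd hdN
          have hcd : orderOf (u' ^ (orderOf u' / d)) = d :=
            orderOf_pow_orderOf_div (orderOf_pos u').ne' hd
          have hcm : u' ^ (orderOf u' / d) ∈ zpowers u' :=
            mem_powers_iff_mem_zpowers.mp ⟨orderOf u' / d, rfl⟩
          have hcne : zpowers (u' ^ (orderOf u' / d)) ≠ zpowers u' := by
            intro h
            have h2 := RPAux.orderOf_eq_of_zpowers_eq h
            rw [hcd] at h2
            exact hdN h2
          have hcOd : u' ^ (orderOf u' / d) ∈ RPAux.Od u' :=
            lt_of_le_of_ne (RPAux.mem_zpowers_iff_le.1 hcm) hcne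
          rw [hOdu'] at hcOd
          rcases hcOd with h1 | h2
          · left
            rw [Set.mem_singleton_iff] at h1
            rw [← hcd, h1, orderOf_one]
          · right
            rw [← hcd]
            exact RPAux.orderOf_eq_of_zpowers_eq (mem_genCls.1 h2)
        have hNn : orderOf u' = orderOf x * orderOf x := by
          have h1 : orderOf u' / orderOf x ∣ orderOf u' := Nat.div_dvd_of_dvd hndvdN
          have h2 : orderOf u' / orderOf x ≠ orderOf u' := by
            have h3 : orderOf u' / orderOf x < orderOf u' :=
              Nat.div_lt_self (orderOf_pos u') hn1'
            omega
          have h4 : orderOf x * (orderOf u' / orderOf x) = orderOf u' :=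
            Nat.mul_div_cancel' hndvdN
          rcases hdivisors _ h1 h2 with h3 | h3
          · rw [h3, mul_one] at h4
            omega
          · rw [h3] at h4
            omega
        -- the hat class of π u' is a single ∼-class
        have hwOdu : w ∈ RPAux.Od (π u') := by
          rw [hOdu]; left; right; exact mem_genCls.2 rfl
        have hvOdu : v ∈ RPAux.Od (π u') := by
          rw [hOdu]; right; exact mem_genCls.2 rfl
        have hhatu : ∀ y, simEq G y (π u') → zpowers y = zpowers (π u') := by
          intro y hy
          have hOy : RPAux.Od y = RPAux.Od (π u') := simEq_Od_eq hy
          have hwy : w ∈ zpowers y := by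
            have h2 : w ∈ RPAux.Od y := by rw [hOy]; exact hwOdu
            exact RPAux.mem_zpowers_iff_le.2 (le_of_lt h2)
          have hvy : v ∈ zpowers y := by
            have h2 : v ∈ RPAux.Od y := by rw [hOy]; exact hvOdu
            exact RPAux.mem_zpowers_iff_le.2 (le_of_lt h2)
          have hty : w * v ∈ zpowers y := mul_mem hwy hvy
          rcases lt_or_eq_of_le (RPAux.mem_zpowers_iff_le.1 hty) with hlt2 | heq
          · exfalso
            have h2 : w * v ∈ RPAux.Od y := hlt2
            rw [hOy] at h2
            have h3 : zpowers (w * v) < zpowers (π u') := h2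
            rw [htu_eq] at h3
            exact lt_irrefl _ h3
          · rw [← heq, htu_eq]
        have hcard_le : (genCls G u').ncard ≤ (genCls G (π u')).ncard := by
          have himg2 : π '' genCls G u' ⊆ genCls G (π u') := by
            rintro _ ⟨c, hc, rfl⟩
            have hzc : zpowers c = zpowers u' := mem_genCls.1 hc
            have hOc : RPAux.Od (π c) = RPAux.Od (π u') := by
              rw [← img_Od π hlt, ← img_Od π hlt, RPAux.Od_congr hzc]
            have hUc : RPAux.Ud (π c) = RPAux.Ud (π u') := by
              rw [← img_Ud π hlt, ← img_Ud π hlt, RPAux.Ud_congr hzc]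
            exact mem_genCls.2 (hhatu _ (simEq_of_OU hOc hUc))
          calc (genCls G u').ncard = (π '' genCls G u').ncard :=
                (Set.ncard_image_of_injective _ π.injective).symm
            _ ≤ _ := Set.ncard_le_ncard himg2 (Set.toFinite _)
        have hdecu' := card_decomp u'
        have hdecu : p * q = (RPAux.Od (π u')).ncard + (genCls G (π u')).ncard := by
          rw [← hou]; exact card_decomp (π u')
        have ha1 : 1 ≤ (genCls G w).ncard := by
          have h2 : (genCls G w).Nonempty := ⟨w, mem_genCls.2 rfl⟩
          have h3 := (Set.ncard_pos (Set.toFinite _)).2 h2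
          omega
        have hb1 : 1 ≤ (genCls G v).ncard := by
          have h2 : (genCls G v).Nonempty := ⟨v, mem_genCls.2 rfl⟩
          have h3 := (Set.ncard_pos (Set.toFinite _)).2 h2
          omega
        -- contradiction by counting
        set A := (genCls G x).ncard with hA_def
        set aa := (genCls G w).ncard with haa_def
        set bb := (genCls G v).ncard with hbb_def
        set cu := (genCls G (π u')).ncard with hcu_def
        set cu' := (genCls G u').ncard with hcu'_def
        have e1 : orderOf u' = (1 + A) + cu' := by rw [hdecu', hOdu'card]
        have e2 : p * q = (1 + aa + bb) + cu := by rw [hdecu, hOducard]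
        have e3 : A = aa + bb := by
          have h2 := hcards
          rw [hOdu'card, hOducard] at h2
          omega
        have e9 : (1 + aa + bb) * (1 + aa + bb) = (1 + aa + bb) + cu' := by
          have t1 : orderOf x = 1 + aa + bb := by omega
          calc (1 + aa + bb) * (1 + aa + bb) = orderOf x * orderOf x := by rw [t1]
            _ = orderOf u' := hNn.symm
            _ = (1 + A) + cu' := e1
            _ = (1 + aa + bb) + cu' := by omega
        have hcu_ab : cu = aa * bb := by
          have hr : (1 + aa) * (1 + bb) = 1 + aa + bb + aa * bb := by ring
          rw [hpa, hqb] at e2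
          linarith
        have hcu'eq : cu' = aa + bb + aa*aa + aa*bb + aa*bb + bb*bb := by
          have hr : (1 + aa + bb) * (1 + aa + bb)
              = (1 + aa + bb) + (aa + bb + aa*aa + aa*bb + aa*bb + bb*bb) := by ring
          linarith
        have hab1 : 1 ≤ aa * bb :=
          Nat.one_le_iff_ne_zero.2 (Nat.mul_ne_zero (by omega) (by omega))
        linarith [hcu_ab, hcu'eq, hcard_le, ha1, hb1, hab1,
          Nat.zero_le (aa*aa), Nat.zero_le (bb*bb), Nat.zero_le (aa*bb)]
    · -- CASE B2 : |D| > 1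
      have hD2 : 2 ≤ (RPAux.Od w).ncard := by
        have hpos : 1 ≤ (RPAux.Od w).ncard := by
          have h2 := (Set.ncard_pos (Set.toFinite _)).2 ⟨1, RPAux.one_mem_Od hw1⟩
          omega
        omega
      have hk2 : 2 ≤ k := by
        by_contra h
        have hkk2 : k = 1 := by omega
        rw [hkk2, Nat.sub_self, pow_zero] at hDcard
        exact hD1 hDcard
      have hl2 : 2 ≤ l := by
        by_contra h
        have hll2 : l = 1 := by omega
        rw [hll2, Nat.sub_self, pow_zero] at hDcard_v
        exact hD1 hDcard_v
      have hpq' : p = q := by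
        have heq : p ^ (k - 1) = q ^ (l - 1) := by rw [← hDcard, hDcard_v]
        have h1 : p ∣ p ^ (k - 1) := dvd_pow_self p (by omega)
        rw [heq] at h1
        exact (Nat.prime_dvd_prime_iff_eq hp hq).1 (hp.dvd_of_dvd_pow h1)
      have hkl : k = l := by
        have heq : p ^ (k - 1) = p ^ (l - 1) := by rw [← hDcard, hDcard_v, hpq']
        have h2 := Nat.pow_right_injective hp.two_le heq
        omega
      have hUe : RPAux.Ud w = ∅ := by
        rw [Set.eq_empty_iff_forall_notMem]
        intro u₀ hu₀
        have hwu₀ : w ∈ zpowers u₀ := RPAux.mem_zpowers_iff_le.2 (le_of_lt hu₀)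
        have hvu₀ : v ∈ zpowers u₀ := by
          have h2 : u₀ ∈ RPAux.Ud v := by rw [← hUwv]; exact hu₀
          exact RPAux.mem_zpowers_iff_le.2 (le_of_lt h2)
        exact hne (RPAux.zpowers_eq_of_orderOf_eq hwu₀ hvu₀ (by rw [how, hov, hpq', hkl]))
      have hOxcard2 : 2 ≤ (RPAux.Od x).ncard := by rw [hOxcard]; exact hD2
      have hxOdne : (RPAux.Od x).Nonempty := by
        refine (Set.ncard_pos (Set.toFinite _)).1 (by omega)
      obtain ⟨c₀, hc₀⟩ := hxOdne
      have hx1 : x ≠ 1 := RPAux.ne_one_of_Od hc₀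
      have hn1 : orderOf x ≠ 1 := fun h => hx1 (orderOf_eq_one_iff.1 h)
      have hgD : w ^ p ∈ RPAux.Od w := by
        rw [hDw]
        exact mem_zpowers (w ^ p)
      have hmax_gen : ∀ d ∈ RPAux.Od w, (∀ d' ∈ RPAux.Od w, ¬ zpowers d < zpowers d') →
          zpowers d = zpowers (w ^ p) := by
        intro d hd hdmax
        have hdg : d ∈ zpowers (w ^ p) := by rw [← SetLike.mem_coe, ← hDw]; exact hd
        rcases lt_or_eq_of_le (RPAux.mem_zpowers_iff_le.1 hdg) with h2 | h2
        · exact absurd h2 (hdmax (w ^ p) hgD)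
        · exact h2
      have hmaxOdx : ∀ c, c ∈ RPAux.Od x → (∀ b ∈ RPAux.Od x, ¬ zpowers c < zpowers b) →
          zpowers (π c) = zpowers (w ^ p) := by
        intro c hc hcmax
        apply hmax_gen
        · rw [← hOx]; exact Set.mem_image_of_mem π hc
        · intro d' hd' hlt2
          rw [← hOx] at hd'
          obtain ⟨c₂, hc₂, rfl⟩ := hd'
          exact hcmax c₂ hc₂ ((hlt c c₂).1 hlt2)
      have hprime_max : ∀ ℓ : ℕ, ℓ.Prime → ℓ ∣ orderOf x →
          x ^ ℓ ∈ RPAux.Od x ∧ (∀ b ∈ RPAux.Od x, ¬ zpowers (x ^ ℓ) < zpowers b) := by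
        intro ℓ hℓ hℓd
        have hmem : x ^ ℓ ∈ RPAux.Od x := RPAux.zpowers_pow_lt hℓ hℓd
        refine ⟨hmem, ?_⟩
        intro b hb hltb
        have hbm : b ∈ zpowers x := RPAux.mem_zpowers_iff_le.2 (le_of_lt hb)
        have hbo : orderOf b ∣ orderOf x := orderOf_dvd_of_mem_zpowers hbm
        have hxo : orderOf (x ^ ℓ) = orderOf x / ℓ := orderOf_pow_of_dvd hℓ.ne_zero hℓd
        have hdvd2 : (orderOf x / ℓ) ∣ orderOf b := by
          rw [← hxo]
          exact orderOf_dvd_of_mem_zpowers (RPAux.mem_zpowers_iff_le.2 (le_of_lt hltb))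
        have hlt3 : orderOf x / ℓ < orderOf b := by
          rw [← hxo]; exact RPAux.orderOf_lt_of_lt hltb
        obtain ⟨m, hm⟩ := hdvd2
        have hnl_pos : 0 < orderOf x / ℓ :=
          Nat.div_pos (Nat.le_of_dvd (orderOf_pos x) hℓd) hℓ.pos
        have hmdvd : m ∣ ℓ := by
          have h4 : (orderOf x / ℓ) * m ∣ (orderOf x / ℓ) * ℓ := by
            rw [← hm, Nat.div_mul_cancel hℓd]
            exact hbo
          exact (Nat.mul_dvd_mul_iff_left hnl_pos).1 h4
        rcases hℓ.eq_one_or_self_of_dvd m hmdvd with h5 | h5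
        · rw [h5, mul_one] at hm
          omega
        · rw [h5] at hm
          have hob : orderOf b = orderOf x := by rw [hm, Nat.div_mul_cancel hℓd]
          have h6 : zpowers b = zpowers x :=
            RPAux.zpowers_eq_of_orderOf_eq hbm (mem_zpowers x) hob
          rw [RPAux.mem_Od, h6] at hb
          exact lt_irrefl _ hb
      by_cases h2p : ∃ ℓ₁ ℓ₂ : ℕ, ℓ₁.Prime ∧ ℓ₂.Prime ∧ ℓ₁ ∣ orderOf x ∧ ℓ₂ ∣ orderOf x ∧ ℓ₁ ≠ ℓ₂
      · -- two distinct primes upstream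
        obtain ⟨ℓ₁, ℓ₂, hℓ₁, hℓ₂, hd₁, hd₂, h12⟩ := h2p
        have hoa : orderOf (x ^ ℓ₁) = orderOf x / ℓ₁ := orderOf_pow_of_dvd hℓ₁.ne_zero hd₁
        have hob : orderOf (x ^ ℓ₂) = orderOf x / ℓ₂ := orderOf_pow_of_dvd hℓ₂.ne_zero hd₂
        have hpos₁ : 0 < orderOf x / ℓ₁ :=
          Nat.div_pos (Nat.le_of_dvd (orderOf_pos x) hd₁) hℓ₁.pos
        have hpos₂ : 0 < orderOf x / ℓ₂ :=
          Nat.div_pos (Nat.le_of_dvd (orderOf_pos x) hd₂) hℓ₂.pos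
        have hne_ab : zpowers (x ^ ℓ₁) ≠ zpowers (x ^ ℓ₂) := by
          intro h
          have h2 := RPAux.orderOf_eq_of_zpowers_eq h
          rw [hoa, hob] at h2
          have e1 : ℓ₁ * (orderOf x / ℓ₁) = orderOf x := Nat.mul_div_cancel' hd₁
          have e2 : ℓ₂ * (orderOf x / ℓ₂) = orderOf x := Nat.mul_div_cancel' hd₂
          rw [h2] at e1
          exact h12 (Nat.eq_of_mul_eq_mul_right hpos₂ (e1.trans e2.symm))
        have hga : zpowers (π (x ^ ℓ₁)) = zpowers (w ^ p) :=
          hmaxOdx _ (hprime_max ℓ₁ hℓ₁ hd₁).1 (hprime_max ℓ₁ hℓ₁ hd₁).2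
        have hgb : zpowers (π (x ^ ℓ₂)) = zpowers (w ^ p) :=
          hmaxOdx _ (hprime_max ℓ₂ hℓ₂ hd₂).1 (hprime_max ℓ₂ hℓ₂ hd₂).2
        have hOab : RPAux.Od (x ^ ℓ₁) = RPAux.Od (x ^ ℓ₂) := by
          have h3 : RPAux.Od (π (x ^ ℓ₁)) = RPAux.Od (π (x ^ ℓ₂)) :=
            RPAux.Od_congr (hga.trans hgb.symm)
          rw [← img_Od π hlt, ← img_Od π hlt] at h3
          exact (Set.image_eq_image π.injective).1 h3
        have hUab : RPAux.Ud (x ^ ℓ₁) = RPAux.Ud (x ^ ℓ₂) := by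
          have h3 : RPAux.Ud (π (x ^ ℓ₁)) = RPAux.Ud (π (x ^ ℓ₂)) :=
            RPAux.Ud_congr (hga.trans hgb.symm)
          rw [← img_Ud π hlt, ← img_Ud π hlt] at h3
          exact (Set.image_eq_image π.injective).1 h3
        obtain ⟨τ, e, hτ, he1, hoa2, _, _⟩ := pair_struct hOab hUab hne_ab
        obtain ⟨σ, f, hσ, hf1, hob2, _, _⟩ := pair_struct hOab.symm hUab.symm (Ne.symm hne_ab)
        rw [hoa] at hoa2
        rw [hob] at hob2
        have hn_eq1 : orderOf x = ℓ₁ * τ ^ e := by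
          rw [← hoa2]; exact (Nat.mul_div_cancel' hd₁).symm
        have hn_eq2 : orderOf x = ℓ₂ * σ ^ f := by
          rw [← hob2]; exact (Nat.mul_div_cancel' hd₂).symm
        have hτℓ₂ : τ = ℓ₂ := by
          have h4 : ℓ₂ ∣ ℓ₁ * τ ^ e := hn_eq1 ▸ hd₂
          have hco : Nat.Coprime ℓ₂ ℓ₁ := (Nat.coprime_primes hℓ₂ hℓ₁).2 (Ne.symm h12)
          have h5 : ℓ₂ ∣ τ ^ e := hco.dvd_of_dvd_mul_left h4
          exact ((Nat.prime_dvd_prime_iff_eq hℓ₂ hτ).1 (hℓ₂.dvd_of_dvd_pow h5)).symm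
        have hσℓ₁ : σ = ℓ₁ := by
          have h4 : ℓ₁ ∣ ℓ₂ * σ ^ f := hn_eq2 ▸ hd₁
          have hco : Nat.Coprime ℓ₁ ℓ₂ := (Nat.coprime_primes hℓ₁ hℓ₂).2 h12
          have h5 : ℓ₁ ∣ σ ^ f := hco.dvd_of_dvd_mul_left h4
          exact ((Nat.prime_dvd_prime_iff_eq hℓ₁ hσ).1 (hℓ₁.dvd_of_dvd_pow h5)).symm
        rw [hτℓ₂] at hn_eq1 hoa2
        rw [hσℓ₁] at hn_eq2 hob2
        have he_eq : e = 1 := by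
          by_contra h
          have he2 : 2 ≤ e := by omega
          have hdd : ℓ₂ * ℓ₂ ∣ orderOf x := by
            rw [hn_eq1]
            exact Dvd.dvd.mul_left (by
              calc ℓ₂ * ℓ₂ = ℓ₂ ^ 2 := (sq ℓ₂).symm
                _ ∣ ℓ₂ ^ e := pow_dvd_pow ℓ₂ he2) ℓ₁
          rw [hn_eq2] at hdd
          have h5 : ℓ₂ ∣ ℓ₁ ^ f := (Nat.mul_dvd_mul_iff_left hℓ₂.pos).1 hdd
          have h6 := (Nat.prime_dvd_prime_iff_eq hℓ₂ hℓ₁).1 (hℓ₂.dvd_of_dvd_pow h5)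
          exact h12 h6.symm
        have hf_eq : f = 1 := by
          by_contra h
          have hf2 : 2 ≤ f := by omega
          have hdd : ℓ₁ * ℓ₁ ∣ orderOf x := by
            rw [hn_eq2]
            exact Dvd.dvd.mul_left (by
              calc ℓ₁ * ℓ₁ = ℓ₁ ^ 2 := (sq ℓ₁).symm
                _ ∣ ℓ₁ ^ f := pow_dvd_pow ℓ₁ hf2) ℓ₂
          rw [hn_eq1] at hdd
          have h5 : ℓ₁ ∣ ℓ₂ ^ e := (Nat.mul_dvd_mul_iff_left hℓ₁.pos).1 hdd
          have h6 := (Nat.prime_dvd_prime_iff_eq hℓ₁ hℓ₂).1 (hℓ₁.dvd_of_dvd_pow h5)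
          exact h12 h6
        rw [he_eq, pow_one] at hn_eq1 hoa2
        rw [hf_eq, pow_one] at hn_eq2 hob2
        have hoA : orderOf (x ^ ℓ₁) = ℓ₂ := by rw [hoa, hoa2]
        have hoB : orderOf (x ^ ℓ₂) = ℓ₁ := by rw [hob, hob2]
        have hxA : x ^ ℓ₁ ∈ zpowers x := mem_powers_iff_mem_zpowers.mp ⟨ℓ₁, rfl⟩
        have hxB : x ^ ℓ₂ ∈ zpowers x := mem_powers_iff_mem_zpowers.mp ⟨ℓ₂, rfl⟩
        have hOdx : RPAux.Od x = {1} ∪ genCls G (x ^ ℓ₁) ∪ genCls G (x ^ ℓ₂) :=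
          Od_two_primes hℓ₂ hℓ₁ (by rw [hn_eq1, mul_comm]) hxA hxB hoA hoB
        -- every non-identity element of D generates ⟨w^p⟩
        have hgen : ∀ d ∈ RPAux.Od w, d ≠ 1 → zpowers d = zpowers (w ^ p) := by
          intro d hd hd1
          rw [← hOx] at hd
          obtain ⟨c, hc, rfl⟩ := hd
          have hc1 : c ≠ 1 := by rintro rfl; exact hd1 (perm_one π hlt)
          have hcOd := hc
          rw [hOdx] at hc
          rcases hc with (h1 | h2) | h3
          · exact absurd h1 hc1
          · refine hmaxOdx c hcOd ?_
            intro b' hb' hltb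
            have h4 := (hprime_max ℓ₁ hℓ₁ hd₁).2 b' hb'
            have h5 : zpowers c = zpowers (x ^ ℓ₁) := mem_genCls.1 h2
            rw [h5] at hltb
            exact h4 hltb
          · refine hmaxOdx c hcOd ?_
            intro b' hb' hltb
            have h4 := (hprime_max ℓ₂ hℓ₂ hd₂).2 b' hb'
            have h5 : zpowers c = zpowers (x ^ ℓ₂) := mem_genCls.1 h3
            rw [h5] at hltb
            exact h4 hltb
        have hk_eq : k = 2 := by
          by_contra hkne
          have hk3 : 3 ≤ k := by omega
          have hdD : (w ^ p) ^ p ∈ RPAux.Od w := by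
            rw [hDw]
            exact mem_powers_iff_mem_zpowers.mp ⟨p, rfl⟩
          have hod : orderOf ((w ^ p) ^ p) = p ^ (k - 2) := by
            rw [orderOf_pow_of_dvd hp.ne_zero (by rw [hogw]; exact dvd_pow_self p (by omega)),
              hogw]
            rw [show k - 1 = (k - 2) + 1 by omega, pow_succ]
            exact Nat.mul_div_cancel _ hp.pos
          have hd1 : (w ^ p) ^ p ≠ 1 := by
            intro h
            rw [h, orderOf_one] at hod
            have h2 : 2 ≤ p ^ (k - 2) := le_trans hp.two_le (Nat.le_self_pow (by omega) p)
            omega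
          have h2 := RPAux.orderOf_eq_of_zpowers_eq (hgen _ hdD hd1)
          rw [hod, hogw] at h2
          have h3 := Nat.pow_right_injective hp.two_le h2
          omega
        -- counting
        have hDp : (RPAux.Od w).ncard = p := by
          rw [hDcard, hk_eq, pow_one]
        have hA1ne : x ^ ℓ₁ ≠ 1 := by
          intro h
          rw [h, orderOf_one] at hoA
          exact hℓ₂.one_lt.ne' hoA.symm
        have hB1ne : x ^ ℓ₂ ≠ 1 := by
          intro h
          rw [h, orderOf_one] at hoB
          exact hℓ₁.one_lt.ne' hoB.symm
        have hOdxcard : (RPAux.Od x).ncard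
            = 1 + (genCls G (x ^ ℓ₁)).ncard + (genCls G (x ^ ℓ₂)).ncard := by
          rw [hOdx]; exact ncard_tri hA1ne hB1ne hne_ab
        have hOdA : RPAux.Od (x ^ ℓ₁) = {1} := Od_of_orderOf_prime (by rw [hoA]; exact hℓ₂)
        have hOdB : RPAux.Od (x ^ ℓ₂) = {1} := Od_of_orderOf_prime (by rw [hoB]; exact hℓ₁)
        have hgenA : ℓ₂ = 1 + (genCls G (x ^ ℓ₁)).ncard := by
          have h2 := card_decomp (x ^ ℓ₁)
          rw [hoA, hOdA, Set.ncard_singleton] at h2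
          exact h2
        have hgenB : ℓ₁ = 1 + (genCls G (x ^ ℓ₂)).ncard := by
          have h2 := card_decomp (x ^ ℓ₂)
          rw [hoB, hOdB, Set.ncard_singleton] at h2
          exact h2
        have hgenW : p * p = p + (genCls G w).ncard := by
          have h2 := card_decomp w
          rw [how, hk_eq, hDp] at h2
          rw [← h2, sq]
        have hAx : orderOf x = (RPAux.Od x).ncard + (genCls G x).ncard := card_decomp x
        have hOdxD : (RPAux.Od x).ncard = p := by rw [hOxcard, hDp]
        have hwsub : (genCls G w).ncard ≤ (genCls G x).ncard := by
          calc (genCls G w).ncard ≤ (hatCls G (π x)).ncard :=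
                Set.ncard_le_ncard hgenwW (Set.toFinite _)
            _ = (genCls G x).ncard := hWcard
        have hα1 : 1 ≤ (genCls G (x ^ ℓ₁)).ncard := by
          have h2 : (genCls G (x ^ ℓ₁)).Nonempty := ⟨x ^ ℓ₁, mem_genCls.2 rfl⟩
          have h3 := (Set.ncard_pos (Set.toFinite _)).2 h2
          omega
        have hβ1 : 1 ≤ (genCls G (x ^ ℓ₂)).ncard := by
          have h2 : (genCls G (x ^ ℓ₂)).Nonempty := ⟨x ^ ℓ₂, mem_genCls.2 rfl⟩
          have h3 := (Set.ncard_pos (Set.toFinite _)).2 h2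
          omega
        set α := (genCls G (x ^ ℓ₁)).ncard with hα_def
        set β := (genCls G (x ^ ℓ₂)).ncard with hβ_def
        set A := (genCls G x).ncard with hA_def
        set cw := (genCls G w).ncard with hcw_def
        have f1 : p = 1 + α + β := by omega
        have f2 : (1 + β) * (1 + α) = (1 + α + β) + A := by
          calc (1 + β) * (1 + α) = ℓ₁ * ℓ₂ := by rw [← hgenA, ← hgenB]
            _ = orderOf x := hn_eq1.symm
            _ = (1 + α + β) + A := by omega
        have fA : A = α * β := by
          have hr : (1 + β) * (1 + α) = 1 + α + β + α * β := by ring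
          linarith
        have f3 : (1 + α + β) * (1 + α + β) = (1 + α + β) + cw := by
          rw [← f1]; exact hgenW
        have fcw : cw = α + β + α*α + α*β + α*β + β*β := by
          have hr : (1 + α + β) * (1 + α + β)
              = (1 + α + β) + (α + β + α*α + α*β + α*β + β*β) := by ring
          linarith
        have hab1 : 1 ≤ α * β :=
          Nat.one_le_iff_ne_zero.2 (Nat.mul_ne_zero (by omega) (by omega))
        linarith [fA, fcw, hwsub, hα1, hβ1, hab1,
          Nat.zero_le (α*α), Nat.zero_le (β*β), Nat.zero_le (α*β)]
      · -- prime power upstream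
        push_neg at h2p
        obtain ⟨ℓ, hℓ, hℓd⟩ := Nat.exists_prime_and_dvd hn1
        obtain ⟨K, hform⟩ : ∃ K, orderOf x = ℓ ^ K :=
          ⟨_, Nat.eq_prime_pow_of_unique_prime_dvd (orderOf_pos x).ne'
            (fun hd hdd => h2p _ _ hd hℓ hdd hℓd)⟩
        have hK1 : 1 ≤ K := by
          by_contra h
          rw [show K = 0 by omega, pow_zero] at hform
          exact hn1 hform
        have hoxℓ : orderOf (x ^ ℓ) = ℓ ^ (K - 1) := by
          rw [orderOf_pow_of_dvd hℓ.ne_zero hℓd, hform,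
            show K = (K - 1) + 1 by omega, pow_succ]
          exact Nat.mul_div_cancel _ hℓ.pos
        have hOdx : RPAux.Od x = (zpowers (x ^ ℓ) : Set G) := by
          ext c
          rw [SetLike.mem_coe]
          constructor
          · intro hc
            have h1 : c ∈ zpowers x := RPAux.mem_zpowers_iff_le.2 hc.le
            have h2 : orderOf c ∣ ℓ ^ K := by
              rw [← hform]; exact orderOf_dvd_of_mem_zpowers h1
            obtain ⟨m, hm, hmeq⟩ := (Nat.dvd_prime_pow hℓ).1 h2
            have hmK : m ≠ K := by
              intro h
              rw [h, ← hform] at hmeq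
              have h3 := RPAux.orderOf_lt_of_lt hc
              omega
            have h3 : orderOf c ∣ orderOf (x ^ ℓ) := by
              rw [hoxℓ, hmeq]
              exact Nat.pow_dvd_pow ℓ (by omega)
            have hxl : x ^ ℓ ∈ zpowers x := mem_powers_iff_mem_zpowers.mp ⟨ℓ, rfl⟩
            exact RPAux.zpowers_le_of_orderOf_dvd h1 hxl h3 (mem_zpowers c)
          · intro hc
            exact lt_of_le_of_lt (RPAux.mem_zpowers_iff_le.1 hc)
              (RPAux.zpowers_pow_lt hℓ hℓd)
        have hOdxcard : (RPAux.Od x).ncard = ℓ ^ (K - 1) := by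
          rw [hOdx, RPAux.ncard_zpowers, hoxℓ]
        have heq2 : ℓ ^ (K - 1) = p ^ (k - 1) := by
          rw [← hOdxcard, hOxcard, hDcard]
        have hK2 : 2 ≤ K := by
          by_contra h
          have h3 : K = 1 := by omega
          rw [h3, Nat.sub_self, pow_zero] at heq2
          have h4 : 2 ≤ p ^ (k - 1) := le_trans hp.two_le (Nat.le_self_pow (by omega) p)
          omega
        have hℓp : ℓ = p := by
          have h1 : ℓ ∣ ℓ ^ (K - 1) := dvd_pow_self ℓ (by omega)
          rw [heq2] at h1
          exact (Nat.prime_dvd_prime_iff_eq hℓ hp).1 (hℓ.dvd_of_dvd_pow h1)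
        have hKk : K = k := by
          have h2 : p ^ (K - 1) = p ^ (k - 1) := by
            calc p ^ (K - 1) = ℓ ^ (K - 1) := by rw [hℓp]
              _ = p ^ (k - 1) := heq2
          have h3 := Nat.pow_right_injective hp.two_le h2
          omega
        have hAeq : p ^ k = p ^ (k - 1) + (genCls G x).ncard := by
          have h2 := card_decomp x
          rw [hform, hOdxcard, hℓp, hKk] at h2
          exact h2
        have hgw2 : p ^ k = p ^ (k - 1) + (genCls G w).ncard := by
          have h2 := card_decomp w
          rw [how, hDcard] at h2
          exact h2
        have hgv2 : p ^ k = p ^ (k - 1) + (genCls G v).ncard := by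
          have h2 := card_decomp v
          rw [hov, ← hOwv, hDcard_v] at h2
          rw [hpq', hkl]
          exact h2
        have hdisj : Disjoint (genCls G w) (genCls G v) := by
          rw [Set.disjoint_left]
          intro a ha hg
          exact hne ((mem_genCls.1 ha).symm.trans (mem_genCls.1 hg))
        have hsum : (genCls G w).ncard + (genCls G v).ncard ≤ (genCls G x).ncard := by
          rw [← Set.ncard_union_eq hdisj (Set.toFinite _) (Set.toFinite _), ← hWcard]
          exact Set.ncard_le_ncard (Set.union_subset hgenwW hgenvW) (Set.toFinite _)
        have hv_ne : 1 ≤ (genCls G v).ncard := by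
          have h2 : (genCls G v).Nonempty := ⟨v, mem_genCls.2 rfl⟩
          have h3 := (Set.ncard_pos (Set.toFinite _)).2 h2
          omega
        linarith
  -- conclude
  have hTypeI : TypeI G (π x) := by
    apply subset_antisymm
    · intro y hy
      exact mem_genCls.2 (key y (π x) hy (simEq_refl _))
    · exact genCls_subset_hatCls (π x)
  refine ⟨hTypeI, ?_⟩
  have h1 : (RPAux.Od (π x)).ncard = (RPAux.Od x).ncard := by
    rw [← img_Od π hlt, Set.ncard_image_of_injective _ π.injective]
  have h2 : (genCls G (π x)).ncard = (genCls G x).ncard := by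
    have h3 : genCls G (π x) = hatCls G (π x) := hTypeI.symm
    rw [h3, ← hhx, ← img_hat π hlt, Set.ncard_image_of_injective _ π.injective]
  rw [card_decomp (π x), card_decomp x, h1, h2]
end
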